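/- arXiv:2302.01685 — 13 statements merged into one kernel-verified Lean document; each statement's English description precedes it below -/
import Mathlib

section
/- Let p and q be odd prime numbers with p = 2q + 1, and let A = (p^q - 1)/(p - 1). Then q divides A, every prime divisor of A other than q is greater than p, and A has at least two distinct prime divisors (so exactly one prime divisor of A is less than p, namely q). -/
private lemma sq_zero_pow {R : Type*} [CommRing R] (x : R) (hx : x ^ 2 = 0) (i : ℕ) :
    (1 + x) ^ i = 1 + i * x := by
  induction i with
  | zero => simp
  | succ n ih =>
    rw [pow_succ, ih]
    push_cast
    linear_combination (n : R) * hx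

/-- Theorem 1: if `p` and `q` are odd primes with `p = 2q + 1` and
`A = (p^q - 1)/(p - 1) = 1 + p + ⋯ + p^(q-1)`, then `q` divides `A`,
every prime divisor of `A` other than `q` is greater than `p`, and
`A` has at least two distinct prime divisors. -/
theorem stmt_0 (p q : ℕ) (hp : p.Prime) (hq : q.Prime) (hpo : Odd p) (hqo : Odd q)
    (hpq : p = 2 * q + 1) (A : ℕ) (hA : A = ∑ i ∈ Finset.range q, p ^ i) :
    q ∣ A ∧ (∀ r : ℕ, r.Prime → r ∣ A → r ≠ q → p < r) ∧
      ∃ r s : ℕ, r.Prime ∧ s.Prime ∧ r ≠ s ∧ r ∣ A ∧ s ∣ A := by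
  have hq2 : 2 ≤ q := hq.two_le
  have hp2 : 2 ≤ p := hp.two_le
  haveI : Fact p.Prime := ⟨hp⟩
  haveI : Fact q.Prime := ⟨hq⟩
  -- q ∣ A
  have hqA : q ∣ A := by
    have h1 : ((A : ZMod q)) = 0 := by
      rw [hA]
      push_cast
      have hpc : (p : ZMod q) = 1 := by
        rw [hpq]; push_cast; simp
      simp [hpc]
    exact (ZMod.natCast_eq_zero_iff A q).mp h1
  -- A is odd
  have hAodd : Odd A := by
    have h2 : ((A : ZMod 2)) = (q : ZMod 2) := by
      rw [hA]
      push_cast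
      have hpc : (p : ZMod 2) = 1 := by
        rw [hpq]; push_cast
        have h20 : (2 : ZMod 2) = 0 := rfl
        rw [h20]; ring
      simp [hpc]
    have h3 : A ≡ q [MOD 2] := (ZMod.natCast_eq_natCast_iff _ _ _).mp h2
    rw [Nat.odd_iff] at hqo ⊢
    unfold Nat.ModEq at h3
    omega
  -- p does not divide A
  have hpA : ¬ p ∣ A := by
    intro hdvd
    have h1 : ((A : ZMod p)) = 0 := (ZMod.natCast_eq_zero_iff A p).mpr hdvd
    obtain ⟨k, hk⟩ : ∃ k, q = k + 1 := ⟨q - 1, by omega⟩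
    rw [hA, hk] at h1
    push_cast at h1
    rw [ZMod.natCast_self] at h1
    simp [Finset.sum_range_succ', zero_pow] at h1
  -- Part 2 : prime divisors other than q exceed p
  have part2 : ∀ r : ℕ, r.Prime → r ∣ A → r ≠ q → p < r := by
    intro r hr hrA hrq
    haveI : Fact r.Prime := ⟨hr⟩
    have h0 : ((A : ZMod r)) = 0 := (ZMod.natCast_eq_zero_iff A r).mpr hrA
    have hsum : (∑ i ∈ Finset.range q, (p : ZMod r) ^ i) = 0 := by
      rw [hA] at h0; push_cast at h0; exact h0
    -- p is not 0 mod r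
    have hpne0 : (p : ZMod r) ≠ 0 := by
      intro h
      have : r ∣ p := (ZMod.natCast_eq_zero_iff p r).mp h
      have : r = p := ((Nat.prime_dvd_prime_iff_eq hr hp).mp this)
      exact hpA (this ▸ hrA)
    -- p is not 1 mod r
    have hpne1 : (p : ZMod r) ≠ 1 := by
      intro h
      rw [h] at hsum
      simp at hsum
      have : r ∣ q := (ZMod.natCast_eq_zero_iff q r).mp hsum
      exact hrq ((Nat.prime_dvd_prime_iff_eq hr hq).mp this)
    -- p^q = 1 mod r
    have hpow : ((p : ZMod r)) ^ q = 1 := by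
      have := geom_sum_mul (p : ZMod r) q
      rw [hsum, zero_mul] at this
      have h2 : ((p : ZMod r)) ^ q - 1 = 0 := this.symm
      linear_combination h2
    have hord : orderOf ((p : ZMod r)) = q := by
      have hdvd : orderOf ((p : ZMod r)) ∣ q := orderOf_dvd_of_pow_eq_one hpow
      rcases (Nat.Prime.eq_one_or_self_of_dvd hq _ hdvd) with h | h
      · exact absurd (orderOf_eq_one_iff.mp h) hpne1
      · exact h
    have hfermat : ((p : ZMod r)) ^ (r - 1) = 1 := ZMod.pow_card_sub_one_eq_one hpne0
    have hqdvd : q ∣ r - 1 := hord ▸ orderOf_dvd_of_pow_eq_one hfermat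
    -- r is odd
    have hrne2 : r ≠ 2 := by
      intro h
      subst h
      rw [Nat.odd_iff] at hAodd
      omega
    have hrodd : r % 2 = 1 := Nat.odd_iff.mp (hr.odd_of_ne_two hrne2)
    have h2dvd : 2 ∣ r - 1 := by omega
    have hcop : Nat.Coprime 2 q := by
      rw [Nat.coprime_primes Nat.prime_two hq]
      rw [Nat.odd_iff] at hqo; omega
    have h2q : 2 * q ∣ r - 1 := Nat.Coprime.mul_dvd_of_dvd_of_dvd hcop h2dvd hqdvd
    have hrpos : 1 ≤ r - 1 := by have := hr.two_le; omega
    have : 2 * q ≤ r - 1 := Nat.le_of_dvd (by omega) h2q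
    have hrnep : r ≠ p := by
      intro h; exact hpA (h ▸ hrA)
    omega
  refine ⟨hqA, part2, ?_⟩
  -- Part 3: two distinct prime divisors
  -- A ≡ q mod q^2
  have hq20 : ((q : ZMod (q ^ 2))) ^ 2 = 0 := by
    have : (((q ^ 2 : ℕ)) : ZMod (q ^ 2)) = 0 := ZMod.natCast_self _
    push_cast at this
    exact this
  have hAq2 : ((A : ZMod (q ^ 2))) = (q : ZMod (q ^ 2)) := by
    rw [hA]
    push_cast
    have hpc : (p : ZMod (q ^ 2)) = 1 + 2 * (q : ZMod (q ^ 2)) := by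
      rw [hpq]; push_cast; ring
    rw [hpc]
    have hx2 : (2 * (q : ZMod (q ^ 2))) ^ 2 = 0 := by
      rw [mul_pow, hq20, mul_zero]
    calc (∑ i ∈ Finset.range q, (1 + 2 * (q : ZMod (q ^ 2))) ^ i)
        = ∑ i ∈ Finset.range q, (1 + (i : ZMod (q ^ 2)) * (2 * q)) := by
          refine Finset.sum_congr rfl fun i _ => ?_
          exact sq_zero_pow _ hx2 i
      _ = (q : ZMod (q ^ 2)) + (∑ i ∈ Finset.range q, (i : ZMod (q ^ 2))) * (2 * q) := by
          rw [Finset.sum_add_distrib, ← Finset.sum_mul]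
          simp
      _ = (q : ZMod (q ^ 2)) := by
          have hsum : ((∑ i ∈ Finset.range q, i : ℕ) : ZMod (q ^ 2)) * 2
              = ((q * (q - 1) : ℕ) : ZMod (q ^ 2)) := by
            have h0 : (((∑ i ∈ Finset.range q, i) * 2 : ℕ) : ZMod (q ^ 2))
                = ((q * (q - 1) : ℕ) : ZMod (q ^ 2)) := by
              rw [Finset.sum_range_id_mul_two]
            exact_mod_cast h0
          have hcast : (∑ i ∈ Finset.range q, (i : ZMod (q ^ 2)))
              = ((∑ i ∈ Finset.range q, i : ℕ) : ZMod (q ^ 2)) := by push_cast; rfl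
          rw [hcast]
          have : ((∑ i ∈ Finset.range q, i : ℕ) : ZMod (q ^ 2)) * (2 * q)
              = ((q * (q - 1) : ℕ) : ZMod (q ^ 2)) * q := by
            rw [← hsum]; ring
          rw [this]
          have hz : ((q * (q - 1) : ℕ) : ZMod (q ^ 2)) * (q : ZMod (q ^ 2)) = 0 := by
            have h0 : ((q * (q - 1) * q : ℕ) : ZMod (q ^ 2)) = 0 := by
              apply (ZMod.natCast_eq_zero_iff _ _).mpr
              exact ⟨q - 1, by ring⟩
            push_cast at h0 ⊢
            linear_combination h0
          rw [hz, add_zero]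
  have hq2ndvd : ¬ q ^ 2 ∣ A := by
    intro hdvd
    have h0 : ((A : ZMod (q ^ 2))) = 0 := (ZMod.natCast_eq_zero_iff _ _).mpr hdvd
    rw [hAq2] at h0
    have : q ^ 2 ∣ q := (ZMod.natCast_eq_zero_iff _ _).mp h0
    have := Nat.le_of_dvd (by omega) this
    nlinarith
  -- A > q
  have hAgt : q < A := by
    rw [hA]
    calc q = ∑ i ∈ Finset.range q, 1 := by simp
      _ < ∑ i ∈ Finset.range q, p ^ i := by
        apply Finset.sum_lt_sum
        · intro i _; exact Nat.one_le_pow _ _ (by omega)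
        · exact ⟨1, Finset.mem_range.mpr (by omega), by simpa using by omega⟩
  obtain ⟨m, hm⟩ := id hqA
  have hm1 : m ≠ 1 := by intro h; rw [h, mul_one] at hm; omega
  have hm0 : m ≠ 0 := by intro h; rw [h, mul_zero] at hm; omega
  have hs := Nat.minFac_prime hm1
  have hsdvd : m.minFac ∣ A := hm ▸ Dvd.dvd.mul_left (Nat.minFac_dvd m) q
  have hsq : m.minFac ≠ q := by
    intro h
    apply hq2ndvd
    rw [hm, pow_two]
    exact Nat.mul_dvd_mul_left q (h ▸ Nat.minFac_dvd m)
  exact ⟨q, m.minFac, hq, hs, fun h => hsq h.symm, hqA, hsdvd⟩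
end

section
/- Let p and q be odd prime numbers with p < 2q + 1, and let A = (p^q - 1)/(p - 1). Then every prime divisor of A is greater than p. -/
/-- Theorem 2: if `p` and `q` are odd primes with `p < 2q + 1`, then every prime
divisor of `A = (p^q - 1)/(p - 1) = 1 + p + ⋯ + p^(q-1)` is greater than `p`. -/
theorem stmt_1 (p q : ℕ) (hp : p.Prime) (hq : q.Prime) (hpo : Odd p) (hqo : Odd q)
    (hpq : p < 2 * q + 1) (A : ℕ) (hA : A = ∑ i ∈ Finset.range q, p ^ i) :
    ∀ r : ℕ, r.Prime → r ∣ A → p < r := by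
  intro r hr hrA
  haveI : Fact r.Prime := ⟨hr⟩
  have hp2 : p ≠ 2 := by rintro rfl; exact (Nat.not_odd_iff_even.mpr even_two) hpo
  have hq2 : q ≠ 2 := by rintro rfl; exact (Nat.not_odd_iff_even.mpr even_two) hqo
  have hp3 : 3 ≤ p := hp.two_le.lt_of_ne' hp2
  -- A is odd
  have hAodd : Odd A := by
    rw [hA, Nat.odd_iff, Finset.sum_nat_mod,
      Finset.sum_congr rfl (fun i _ => Nat.odd_iff.mp hpo.pow)]
    simp [Nat.odd_iff.mp hqo]
  have hr2 : r ≠ 2 := by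
    rintro rfl
    exact (Nat.not_even_iff_odd.mpr hAodd) (even_iff_two_dvd.mpr hrA)
  have hr3 : 3 ≤ r := hr.two_le.lt_of_ne' hr2
  -- sum vanishes mod r
  have h0 : (∑ i ∈ Finset.range q, (p : ZMod r) ^ i) = 0 := by
    have : ((A : ℕ) : ZMod r) = 0 := (ZMod.natCast_eq_zero_iff _ _).mpr hrA
    rw [hA] at this
    push_cast at this
    exact this
  have hxq : (p : ZMod r) ^ q = 1 := by
    have := geom_sum_mul (p : ZMod r) q
    rw [h0, zero_mul] at this
    have := sub_eq_zero.mp this.symm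
    linear_combination this
  have hx0 : (p : ZMod r) ≠ 0 := by
    intro h
    rw [h, zero_pow hq.ne_zero] at hxq
    exact zero_ne_one hxq
  have hord : orderOf (p : ZMod r) ∣ q := orderOf_dvd_of_pow_eq_one hxq
  rcases (Nat.Prime.eq_one_or_self_of_dvd hq _ hord) with h1 | hordq
  · -- order 1 : p ≡ 1 mod r, get a contradiction
    exfalso
    have hpeq : (p : ZMod r) = 1 := orderOf_eq_one_iff.mp h1
    have hrq : r = q := by
      have hq0 : ((q : ℕ) : ZMod r) = 0 := by
        have := h0
        rw [Finset.sum_congr rfl (fun i _ => by rw [hpeq, one_pow])] at this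
        simpa using this
      have hdvd : r ∣ q := (ZMod.natCast_eq_zero_iff _ _).mp hq0
      exact (Nat.Prime.eq_one_or_self_of_dvd hq _ hdvd).resolve_left hr.one_lt.ne'
    have hmod : p ≡ 1 [MOD r] := by
      have : ((p : ℕ) : ZMod r) = ((1 : ℕ) : ZMod r) := by simpa using hpeq
      exact (ZMod.natCast_eq_natCast_iff _ _ _).mp this
    have hrd : r ∣ p - 1 := (Nat.modEq_iff_dvd' (by omega)).mp hmod.symm
    have h2d : 2 ∣ p - 1 := by
      rcases hpo with ⟨k, hk⟩
      omega
    have hcop : Nat.Coprime 2 q := by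
      exact Nat.coprime_two_left.mpr hqo
    have h2q : 2 * q ∣ p - 1 := hcop.mul_dvd_of_dvd_of_dvd h2d (hrq ▸ hrd)
    have := Nat.le_of_dvd (by omega) h2q
    omega
  · -- order q : 2q ∣ r - 1
    have hqd : q ∣ r - 1 := by
      have := ZMod.orderOf_dvd_card_sub_one hx0
      rwa [hordq] at this
    have h2d : 2 ∣ r - 1 := by
      have hro : Odd r := hr.odd_of_ne_two hr2
      rcases hro with ⟨k, hk⟩
      omega
    have hcop : Nat.Coprime 2 q := by
      exact Nat.coprime_two_left.mpr hqo
    have h2q : 2 * q ∣ r - 1 := hcop.mul_dvd_of_dvd_of_dvd h2d hqd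
    have := Nat.le_of_dvd (by omega) h2q
    omega
end

section
/- Let q be an odd prime number and let p be a natural number with 2 ≤ p ≤ 2q and p ≠ q + 1 (that is, p lies in ]1; q] ∪ [q + 2; 2q]). Then every prime divisor of A = (p^q - 1)/(p - 1) is greater than p. -/
/-- Theorem 3: if `q` is an odd prime and `p` is a natural number with
`2 ≤ p ≤ 2q` and `p ≠ q + 1`, then every prime divisor of
`A = (p^q - 1)/(p - 1) = 1 + p + ⋯ + p^(q-1)` is greater than `p`. -/
theorem stmt_2 (p q : ℕ) (hq : q.Prime) (hqo : Odd q)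
    (hp2 : 2 ≤ p) (hp2q : p ≤ 2 * q) (hpne : p ≠ q + 1)
    (A : ℕ) (hA : A = ∑ i ∈ Finset.range q, p ^ i) :
    ∀ r : ℕ, r.Prime → r ∣ A → p < r := by
  intro r hr hrA
  haveI : Fact r.Prime := ⟨hr⟩
  set x : ZMod r := (p : ZMod r) with hx
  -- sum of powers is zero mod r
  have hsum : ∑ i ∈ Finset.range q, x ^ i = 0 := by
    have : ((A : ℕ) : ZMod r) = 0 := (ZMod.natCast_eq_zero_iff A r).mpr hrA
    rw [hA] at this
    push_cast at this
    simpa [hx] using this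
  have hxq : x ^ q = 1 := by
    have h := geom_sum_mul x q
    rw [hsum, zero_mul] at h
    have : x ^ q - 1 = 0 := h.symm
    linear_combination this
  have hx0 : x ≠ 0 := by
    intro h0
    rw [h0, zero_pow hq.ne_zero] at hxq
    exact zero_ne_one hxq
  have hord : orderOf x ∣ q := orderOf_dvd_of_pow_eq_one hxq
  rcases (Nat.Prime.eq_one_or_self_of_dvd hq _ hord) with h1 | hqq
  · -- order 1 : x = 1
    have hx1 : x = 1 := orderOf_eq_one_iff.mp h1
    -- then sum = q mod r, so r ∣ q, r = q
    have : ((q : ℕ) : ZMod r) = 0 := by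
      have := hsum
      simp [hx1] at this
      simpa using this
    have hrq : r ∣ q := (ZMod.natCast_eq_zero_iff q r).mp this
    have hrq' : r = q := ((Nat.prime_dvd_prime_iff_eq hr hq).mp hrq)
    -- x = 1 means r ∣ p - 1
    have hpd : r ∣ p - 1 := by
      have : ((p - 1 : ℕ) : ZMod r) = 0 := by
        have h1p : (1:ℕ) ≤ p := by omega
        push_cast [Nat.cast_sub h1p]
        rw [← hx, hx1]; ring
      exact (ZMod.natCast_eq_zero_iff _ r).mp this
    rw [hrq'] at hpd
    obtain ⟨k, hk⟩ := hpd
    have hq2 : 2 ≤ q := hq.two_le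
    have hkub : k ≤ 1 := by
      by_contra h
      push_neg at h
      have : 2 * q ≤ q * k := by nlinarith
      omega
    interval_cases k <;> omega
  · -- order q : q ∣ r - 1
    have hdvd : orderOf x ∣ r - 1 := ZMod.orderOf_dvd_card_sub_one hx0
    rw [hqq] at hdvd
    obtain ⟨k, hk⟩ := hdvd
    have hq2 : 2 ≤ q := hq.two_le
    have hr2 : 2 ≤ r := hr.two_le
    -- k ≥ 1
    have hk1 : 1 ≤ k := by
      rcases Nat.eq_zero_or_pos k with h | h
      · subst h; simp at hk; omega
      · exact h
    -- k ≠ 1 : else r = q + 1 even and prime, impossible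
    have hk2 : k ≠ 1 := by
      intro h
      subst h
      have hreq : r = q + 1 := by omega
      have heven : Even r := by
        rcases hqo with ⟨m, hm⟩
        exact ⟨m + 1, by omega⟩
      have := (Nat.Prime.even_iff hr).mp heven
      omega
    have hk2' : 2 ≤ k := by omega
    have : 2 * q ≤ q * k := by
      calc 2 * q = q * 2 := by ring
        _ ≤ q * k := Nat.mul_le_mul_left q hk2'
    omega
end

section
/- Let q be an odd prime number and let p ∈ {q + 1, 2q + 1}, and let A = (p^q - 1)/(p - 1). Then q divides A, every prime divisor of A other than q is greater than p, and A has at least two distinct prime divisors (so exactly one prime divisor of A is less than p, namely q). -/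
/-- Theorem 4: if `q` is an odd prime and `p ∈ {q + 1, 2q + 1}`, then for
`A = (p^q - 1)/(p - 1) = 1 + p + ⋯ + p^(q-1)`, `q` divides `A`, every prime
divisor of `A` other than `q` exceeds `p`, and `A` has at least two distinct
prime divisors. -/
theorem stmt_3 (p q : ℕ) (hq : q.Prime) (hqo : Odd q)
    (hp : p = q + 1 ∨ p = 2 * q + 1)
    (A : ℕ) (hA : A = ∑ i ∈ Finset.range q, p ^ i) :
    q ∣ A ∧ (∀ r : ℕ, r.Prime → r ∣ A → r ≠ q → p < r) ∧
      ∃ r s : ℕ, r.Prime ∧ s.Prime ∧ r ≠ s ∧ r ∣ A ∧ s ∣ A := by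
  have hq2 : q ≠ 2 := by rintro rfl; exact (by decide : ¬ Odd 2) hqo
  have hq3 : 3 ≤ q := by have := hq.two_le; omega
  have hp4 : 4 ≤ p := by rcases hp with h | h <;> omega
  -- p ≡ 1 mod q
  have hpmodq : (p : ZMod q) = 1 := by
    rcases hp with h | h <;> subst h <;> push_cast <;> simp [ZMod.natCast_self]
  -- q ∣ A
  have h1 : q ∣ A := by
    have h0 : ((A : ℕ) : ZMod q) = 0 := by
      rw [hA]; push_cast
      simp [hpmodq, Finset.sum_const, ZMod.natCast_self]
    exact (ZMod.natCast_eq_zero_iff A q).mp h0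
  -- every other prime divisor exceeds p
  have h2 : ∀ r : ℕ, r.Prime → r ∣ A → r ≠ q → p < r := by
    intro r hr hrA hrq
    haveI := Fact.mk hr
    have hA0 : ((A : ℕ) : ZMod r) = 0 := (ZMod.natCast_eq_zero_iff A r).mpr hrA
    have hsum : (∑ i ∈ Finset.range q, (p : ZMod r) ^ i) = 0 := by
      rw [hA] at hA0; push_cast at hA0; exact hA0
    have hpq1 : (p : ZMod r) ^ q = 1 := by
      have h := mul_geom_sum ((p : ZMod r)) q
      rw [hsum, mul_zero] at h
      have := sub_eq_zero.mp h.symm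
      exact this
    have hp0 : (p : ZMod r) ≠ 0 := by
      intro h
      rw [h, zero_pow hq.ne_zero] at hpq1
      exact zero_ne_one hpq1
    have hord : orderOf (p : ZMod r) ∣ q := orderOf_dvd_of_pow_eq_one hpq1
    rcases hq.eq_one_or_self_of_dvd _ hord with ho1 | hoq
    · -- order 1 : p ≡ 1 mod r, so r ∣ q, contradiction
      have hp1 : (p : ZMod r) = 1 := orderOf_eq_one_iff.mp ho1
      rw [Finset.sum_congr rfl (fun i _ => by rw [hp1, one_pow])] at hsum
      simp [Finset.sum_const] at hsum
      have : r ∣ q := (ZMod.natCast_eq_zero_iff q r).mp hsum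
      exact absurd ((Nat.prime_dvd_prime_iff_eq hr hq).mp this) hrq
    · -- order q : q ∣ r - 1
      have hdvd : q ∣ r - 1 := by
        rw [← hoq]
        exact orderOf_dvd_of_pow_eq_one (ZMod.pow_card_sub_one_eq_one hp0)
      obtain ⟨k, hk⟩ := hdvd
      have hr2 : 2 ≤ r := hr.two_le
      have hrk : r = q * k + 1 := by omega
      by_contra hle
      push_neg at hle
      -- r ≤ p
      have hqp1_not_prime : ¬ (q + 1).Prime := by
        intro h
        have heven : Even (q + 1) := Odd.add_one hqo
        have := (Nat.Prime.even_iff h).mp heven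
        omega
      rcases hp with hcase | hcase
      · -- p = q + 1
        have hkle : k ≤ 1 := by
          by_contra hk2
          push_neg at hk2
          have : q * 2 ≤ q * k := Nat.mul_le_mul_left q hk2
          omega
        interval_cases k
        · omega
        · rw [hrk, mul_one] at hr; exact hqp1_not_prime hr
      · -- p = 2q + 1
        have hkle : k ≤ 2 := by
          by_contra hk2
          push_neg at hk2
          have : q * 3 ≤ q * k := Nat.mul_le_mul_left q hk2
          omega
        interval_cases k
        · omega
        · rw [hrk, mul_one] at hr; exact hqp1_not_prime hr
        · -- r = 2q + 1 = p, but p ∤ A since A ≡ 1 mod p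
          have hpr : (p : ZMod r) = 0 := by
            rw [show p = r by omega]; exact ZMod.natCast_self r
          rw [hpr] at hsum
          rw [Finset.sum_eq_single 0 (fun b _ hb => zero_pow hb)
            (fun h => absurd (Finset.mem_range.mpr (by omega)) h)] at hsum
          simp at hsum
  -- A > q
  have hAq : q < A := by
    rw [hA]
    calc q = ∑ _i ∈ Finset.range q, 1 := by simp
    _ < ∑ i ∈ Finset.range q, p ^ i := by
        apply Finset.sum_lt_sum
        · intro i _; exact Nat.one_le_pow _ _ (by omega)
        · exact ⟨1, Finset.mem_range.mpr (by omega), by simpa using (by omega : 1 < p)⟩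
  -- q^2 ∣ A - q
  set S : ℤ := ∑ i ∈ Finset.range q, ∑ j ∈ Finset.range i, (p : ℤ) ^ j with hS
  have hSz : (A : ℤ) - q = ((p : ℤ) - 1) * S := by
    rw [hA, hS, Finset.mul_sum]
    push_cast
    rw [Finset.sum_congr rfl (fun i _ => mul_geom_sum ((p:ℤ)) i)]
    rw [Finset.sum_sub_distrib]
    simp
  have hSq : (q : ℤ) ∣ S := by
    have h0 : ((S : ℤ) : ZMod q) = 0 := by
      rw [hS]
      push_cast
      simp only [hpmodq, one_pow]
      simp only [Finset.sum_const, Finset.card_range, nsmul_eq_mul, mul_one]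
      rw [← Nat.cast_sum]
      have hsum2 := Finset.sum_range_id_mul_two q
      have hdvd : q ∣ (∑ i ∈ Finset.range q, i) := by
        have h2 : q ∣ (∑ i ∈ Finset.range q, i) * 2 := by
          rw [hsum2]; exact dvd_mul_right q (q - 1)
        exact (Nat.Coprime.dvd_of_dvd_mul_right
          hqo.coprime_two_right h2)
      exact (ZMod.natCast_eq_zero_iff _ q).mpr hdvd
    exact (ZMod.intCast_zmod_eq_zero_iff_dvd S q).mp h0
  have hqpz : (q : ℤ) ∣ (p : ℤ) - 1 := by
    rcases hp with h | h <;> subst h <;> push_cast <;> [exact ⟨1, by ring⟩; exact ⟨2, by ring⟩]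
  have hdvdZ : ((q : ℤ)) ^ 2 ∣ (A : ℤ) - q := by
    rw [hSz, sq]
    exact mul_dvd_mul hqpz hSq
  have hnat : q ^ 2 ∣ A - q := by
    rwa [show (A : ℤ) - q = ((A - q : ℕ) : ℤ) by push_cast [Nat.cast_sub hAq.le]; ring,
      show ((q : ℤ)) ^ 2 = ((q ^ 2 : ℕ) : ℤ) by push_cast; ring,
      Int.natCast_dvd_natCast] at hdvdZ
  have hq2A : ¬ q ^ 2 ∣ A := by
    intro h
    have hd : q ^ 2 ∣ q := by
      have := Nat.dvd_sub h hnat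
      rwa [Nat.sub_sub_self hAq.le] at this
    have := Nat.le_of_dvd (by omega) hd
    nlinarith
  -- two distinct prime divisors
  obtain ⟨m, hm⟩ := h1
  have hm2 : 2 ≤ m := by
    rcases Nat.lt_or_ge m 2 with h | h
    · interval_cases m <;> omega
    · exact h
  have hsprime : m.minFac.Prime := Nat.minFac_prime (by omega)
  have hsne : q ≠ m.minFac := by
    intro h
    apply hq2A
    rw [hm, sq]
    exact Nat.mul_dvd_mul_left q (h ▸ Nat.minFac_dvd m)
  exact ⟨⟨m, hm⟩, h2, q, m.minFac, hq, hsprime, hsne,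
    ⟨m, hm⟩, Dvd.dvd.trans (Nat.minFac_dvd m) ⟨q, by rw [hm]; ring⟩⟩
end

section
/- Let x and z be natural numbers and let y be a prime number. Then 2^x = (y^z - 1)/(y - 1) holds if and only if z = 2 and y = 2^x - 1 (so y is a Mersenne prime). -/
lemma fac_lemma (y m : ℕ) :
    ∑ i ∈ Finset.range (2 * m), y ^ i = (1 + y) * ∑ j ∈ Finset.range m, (y ^ 2) ^ j := by
  induction m with
  | zero => simp
  | succ m ih =>
    rw [Nat.mul_succ, Finset.sum_range_succ, Finset.sum_range_succ, Finset.sum_range_succ, ih]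
    ring

lemma par_lemma (y z : ℕ) (hodd : Odd y) :
    (∑ i ∈ Finset.range z, y ^ i) % 2 = z % 2 := by
  rw [Finset.sum_nat_mod]
  have h1 : ∀ i, y ^ i % 2 = 1 := by
    intro i
    rw [Nat.pow_mod, Nat.odd_iff.mp hodd, one_pow]; norm_num
  simp only [h1]
  simp [Finset.sum_const]

lemma aux_lemma : ∀ z, 0 < z → ∀ y, Odd y → 3 ≤ y → ∀ k,
    (∑ i ∈ Finset.range z, y ^ i) = 2 ^ k → z = 1 ∨ z = 2 := by
  intro z
  induction z using Nat.strong_induction_on with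
  | _ z ih =>
    intro hz y hodd hy3 k hsum
    by_contra hcon
    push_neg at hcon
    have hz3 : 3 ≤ z := by omega
    -- sum ≥ 1 + y ≥ 4
    have hlb : 1 + y ≤ ∑ i ∈ Finset.range z, y ^ i := by
      have hsub : Finset.range 2 ⊆ Finset.range z := Finset.range_subset_range.mpr (by omega)
      calc 1 + y = ∑ i ∈ Finset.range 2, y ^ i := by simp [Finset.sum_range_succ]
        _ ≤ _ := Finset.sum_le_sum_of_subset hsub
    have hk1 : 1 ≤ k := by
      by_contra hk
      push_neg at hk
      interval_cases k <;> omega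
    -- z even
    have hzev : z % 2 = 0 := by
      have := par_lemma y z hodd
      rw [hsum] at this
      have h2 : 2 ^ k % 2 = 0 := by
        have : (2:ℕ) ∣ 2 ^ k := dvd_pow_self 2 (by omega)
        omega
      omega
    obtain ⟨m, hm⟩ : ∃ m, z = 2 * m := ⟨z / 2, by omega⟩
    have hm2 : 2 ≤ m := by omega
    rw [hm, fac_lemma] at hsum
    have hSdvd : (∑ j ∈ Finset.range m, (y ^ 2) ^ j) ∣ 2 ^ k := ⟨1 + y, by rw [← hsum]; ring⟩
    obtain ⟨a, _, hS⟩ := (Nat.dvd_prime_pow Nat.prime_two).mp hSdvd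
    have hodd2 : Odd (y ^ 2) := hodd.pow
    have hm12 : m = 1 ∨ m = 2 :=
      ih m (by omega) (by omega) (y ^ 2) hodd2 (by nlinarith) a hS
    have hmeq : m = 2 := by omega
    subst hmeq
    -- S = 1 + y^2 = 2^a, contradiction mod 4
    rw [Finset.sum_range_succ, Finset.sum_range_succ] at hS
    simp at hS
    obtain ⟨t, ht⟩ := hodd
    have ha2 : 2 ≤ a := by
      by_contra hk
      push_neg at hk
      interval_cases a <;> nlinarith
    have h4 : (4:ℕ) ∣ 2 ^ a := by
      have : (2:ℕ) ^ 2 ∣ 2 ^ a := pow_dvd_pow 2 ha2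
      simpa using this
    have : y ^ 2 = 4 * (t * t + t) + 1 := by subst ht; ring
    omega

/-- Task 1: for positive naturals `x, z` and a prime `y`,
`2^x = (y^z - 1)/(y - 1) = 1 + y + ⋯ + y^(z-1)` holds iff `z = 2` and
`y = 2^x - 1` (a Mersenne prime). -/
theorem stmt_5 (x z y : ℕ) (hx : 0 < x) (hz : 0 < z) (hy : y.Prime) :
    2 ^ x = ∑ i ∈ Finset.range z, y ^ i ↔ z = 2 ∧ y = 2 ^ x - 1 := by
  constructor
  · intro h
    have hy2 : y ≠ 2 := by
      rintro rfl
      have hp := par_lemma 3 z (by decide)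
      -- y = 2 case: sum is odd, 2^x even
      have hodd : (∑ i ∈ Finset.range z, (2:ℕ) ^ i) % 2 = 1 := by
        rw [Finset.sum_nat_mod]
        have h1 : ∀ i ∈ Finset.range z, (2:ℕ) ^ i % 2 = if i = 0 then 1 else 0 := by
          intro i _
          rcases i with _ | i
          · simp
          · simp [Nat.pow_succ, Nat.mul_mod]
        rw [Finset.sum_congr rfl h1]
        rw [Finset.sum_ite_eq' (Finset.range z) 0 (fun _ => 1)]
        simp [Finset.mem_range.mpr hz]
      have hev : (2:ℕ) ^ x % 2 = 0 := by
        have : (2:ℕ) ∣ 2 ^ x := dvd_pow_self 2 (by omega)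
        omega
      omega
    have hodd : Odd y := hy.odd_of_ne_two hy2
    have hy3 : 3 ≤ y := by
      have := hy.two_le
      rcases Nat.odd_iff.mp hodd with h
      omega
    have := aux_lemma z hz y hodd hy3 x h.symm
    have hx2 : 2 ≤ 2 ^ x := by
      calc (2:ℕ) = 2 ^ 1 := by norm_num
        _ ≤ 2 ^ x := Nat.pow_le_pow_right (by norm_num) hx
    rcases this with h1 | h2
    · subst h1; simp at h; omega
    · subst h2
      rw [Finset.sum_range_succ, Finset.sum_range_succ] at h
      simp at h
      exact ⟨rfl, by omega⟩
  · rintro ⟨rfl, rfl⟩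
    rw [Finset.sum_range_succ, Finset.sum_range_succ]
    have hx2 : 2 ≤ 2 ^ x := by
      calc (2:ℕ) = 2 ^ 1 := by norm_num
        _ ≤ 2 ^ x := Nat.pow_le_pow_right (by norm_num) hx
    simp
    omega
end

section
/- Let P, y, z be prime numbers with P ≥ 5 and z odd, and let x be a natural number such that P^x = (y^z - 1)/(y - 1). Then P ≡ 1 (mod z). -/
/-- If `P, y, z` are primes with `P ≥ 5` and `z` odd, and `x` is a positive
natural with `P^x = (y^z - 1)/(y - 1) = 1 + y + ⋯ + y^(z-1)`, then
`P ≡ 1 (mod z)`. -/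
theorem stmt_7 (P y z x : ℕ) (hP : P.Prime) (hy : y.Prime) (hz : z.Prime)
    (hP5 : 5 ≤ P) (hzo : Odd z) (hx : 0 < x)
    (h : P ^ x = ∑ i ∈ Finset.range z, y ^ i) :
    P ≡ 1 [MOD z] := by
  haveI : Fact P.Prime := ⟨hP⟩
  have hy2 : 2 ≤ y := hy.two_le
  have hz2 : 2 ≤ z := hz.two_le
  -- sum is 0 in ZMod P
  have hsum0 : (∑ i ∈ Finset.range z, (y : ZMod P) ^ i) = 0 := by
    have := congrArg (Nat.cast : ℕ → ZMod P) h
    push_cast at this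
    rw [← this, ZMod.natCast_self, zero_pow hx.ne']
  set u : ZMod P := (y : ZMod P) with hu
  have huz : u ^ z = 1 := by
    have hg := geom_sum_mul u z
    rw [hsum0, zero_mul] at hg
    have : u ^ z - 1 = 0 := hg.symm
    linear_combination this
  have hu0 : u ≠ 0 := by
    intro h0
    rw [h0, zero_pow (by omega : z ≠ 0)] at huz
    exact zero_ne_one huz
  have hord : orderOf u ∣ z := orderOf_dvd_of_pow_eq_one huz
  rcases (Nat.Prime.eq_one_or_self_of_dvd hz _ hord) with h1 | hordz
  · -- order 1 : u = 1, leads to contradiction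
    exfalso
    have hu1 : u = 1 := orderOf_eq_one_iff.mp h1
    -- then z = 0 in ZMod P, so P = z
    have hz0 : ((z : ℕ) : ZMod P) = 0 := by
      rw [hu] at hu1
      calc ((z : ℕ) : ZMod P) = ∑ i ∈ Finset.range z, (y : ZMod P) ^ i := by
            rw [hu1]; simp
        _ = 0 := hsum0
    have hPz : P = z := ((Nat.prime_dvd_prime_iff_eq hP hz).mp
      ((ZMod.natCast_eq_zero_iff z P).mp hz0))
    -- P ∣ y - 1 (as integers), P ∤ y
    have hdvd1 : (P : ℤ) ∣ (y : ℤ) - 1 := by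
      have : ((y : ℤ) : ZMod P) = ((1 : ℤ) : ZMod P) := by push_cast; exact hu1
      have := (ZMod.intCast_eq_intCast_iff' _ _ _).mp this
      exact Int.ModEq.dvd this.symm
    have hndvd : ¬ (P : ℤ) ∣ (y : ℤ) := by
      intro hd
      apply hu0
      rw [hu]
      exact_mod_cast (ZMod.intCast_zmod_eq_zero_iff_dvd (y : ℤ) P).mpr hd
    -- LTE
    have hlte := Int.emultiplicity_pow_sub_pow hP (hP.odd_of_ne_two (by omega))
      (by simpa using hdvd1) hndvd z
    rw [one_pow] at hlte
    -- y^z - 1 = (y-1) * P^x in ℤ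
    have hfact : (y : ℤ) ^ z - 1 = ((y : ℤ) - 1) * (P : ℤ) ^ x := by
      have hg := geom_sum_mul (y : ℤ) z
      rw [← hg]
      have : (∑ i ∈ Finset.range z, (y : ℤ) ^ i) = (P : ℤ) ^ x := by
        exact_mod_cast congrArg (Nat.cast : ℕ → ℤ) h.symm
      rw [this]; ring
    rw [hfact, emultiplicity_mul (Nat.prime_iff_prime_int.mp hP),
      emultiplicity_pow_self_of_prime (Nat.prime_iff_prime_int.mp hP), hPz,
      Nat.Prime.emultiplicity_self hz] at hlte
    have hfin : FiniteMultiplicity (P : ℤ) ((y : ℤ) - 1) :=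
      Int.finiteMultiplicity_iff.mpr ⟨by simpa using hP.ne_one, by
        have : (2:ℤ) ≤ (y:ℤ) := by exact_mod_cast hy2
        omega⟩
    rw [hPz] at hfin
    rw [hfin.emultiplicity_eq_multiplicity] at hlte
    have hx1 : (x : ℕ∞) = 1 := by
      have := WithTop.add_left_cancel (by simp : ((multiplicity ((z:ℕ):ℤ) ((y:ℤ)-1)) : ℕ∞) ≠ ⊤) hlte
      exact this
    have hx1' : x = 1 := by exact_mod_cast hx1
    -- Now P = z = sum, but sum > z
    rw [hx1', pow_one] at h
    have hlt : z < ∑ i ∈ Finset.range z, y ^ i := by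
      calc z = ∑ _i ∈ Finset.range z, 1 := by simp
        _ < ∑ i ∈ Finset.range z, y ^ i := by
            apply Finset.sum_lt_sum
            · intro i _; exact Nat.one_le_pow _ _ (by omega)
            · exact ⟨1, Finset.mem_range.mpr (by omega), by simpa using by omega⟩
    omega
  · -- order z : z ∣ P - 1
    have hfer : u ^ (P - 1) = 1 := ZMod.pow_card_sub_one_eq_one hu0
    have : z ∣ P - 1 := hordz ▸ orderOf_dvd_of_pow_eq_one hfer
    exact ((Nat.modEq_iff_dvd' (by omega)).mpr this).symm
end

section
/- Let x, y, z be natural numbers. Then (x + y)^z = 2^z · (x^z - y^z) holds if and only if there exists a natural number t such that (x, y, z) = (3t, t, 1) or (x, y, z) = (5t, 3t, 2). Equivalently, when x + y is even, ((x+y)/2)^z = x^z - y^z has exactly these solutions. -/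
lemma sq_dvd_aux (c m : ℤ) : ∀ n : ℕ, (m^2) ∣ (c+m)^(n+1) - c^(n+1) - (n+1)*m*c^n
  | 0 => by simp
  | n+1 => by
    obtain ⟨t, ht⟩ := sq_dvd_aux c m n
    refine ⟨(c+m)*t + (n+1)*c^n, ?_⟩
    push_cast
    linear_combination (c+m)*ht
lemma lemB (m d : ℤ) (z : ℕ) (hm : 1 ≤ m) (hd : 1 ≤ d) (hz : 3 ≤ z) :
    2*z*m^(z-1)*d < (m+d)^z - (m-d)^z := by
  have hsum : (m+d)^z - (m-d)^z
      = ∑ k ∈ Finset.range (z+1), m^k * (d^(z-k) - (-d)^(z-k)) * (z.choose k : ℤ) := by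
    rw [show m - d = m + (-d) by ring, add_pow, add_pow, ← Finset.sum_sub_distrib]
    exact Finset.sum_congr rfl fun k _ => by ring
  set f : ℕ → ℤ := fun k => m^k * (d^(z-k) - (-d)^(z-k)) * (z.choose k : ℤ) with hf
  have hpos : ∀ k, 0 ≤ f k := by
    intro k
    have h1 : (-d)^(z-k) ≤ d^(z-k) := by
      rcases Nat.even_or_odd (z-k) with he | ho
      · rw [he.neg_pow]
      · rw [ho.neg_pow]
        have := pow_nonneg (by linarith : (0:ℤ) ≤ d) (z-k)
        linarith
    have := pow_nonneg (by linarith : (0:ℤ) ≤ m) k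
    have := Nat.cast_nonneg (α := ℤ) (z.choose k)
    have : (0:ℤ) ≤ d^(z-k) - (-d)^(z-k) := by linarith
    positivity
  have hss : ({z-1, z-3} : Finset ℕ) ⊆ Finset.range (z+1) := by
    intro k hk
    simp only [Finset.mem_insert, Finset.mem_singleton, Finset.mem_range] at hk ⊢
    omega
  have hle : f (z-1) + f (z-3) ≤ ∑ k ∈ Finset.range (z+1), f k := by
    have h := Finset.sum_le_sum_of_subset_of_nonneg hss (fun i _ _ => hpos i)
    rwa [Finset.sum_pair (show z-1 ≠ z-3 by omega)] at h
  have hv1 : f (z-1) = 2*z*m^(z-1)*d := by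
    rw [hf]
    simp only []
    rw [show z - (z-1) = 1 by omega, Nat.choose_symm (by omega), Nat.choose_one_right]
    ring
  have hv3 : 0 < f (z-3) := by
    rw [hf]
    simp only []
    rw [show z - (z-3) = 3 by omega, Nat.choose_symm (by omega)]
    have h1 : (0:ℤ) < m^(z-3) := pow_pos (by linarith) _
    have h2 : (0:ℤ) < d^3 - (-d)^3 := by
      have : (0:ℤ) < d^3 := pow_pos (by linarith) _
      have : (-d)^3 = -d^3 := by ring
      linarith [pow_pos (show (0:ℤ) < d by linarith) 3]
    have h3 : (0:ℤ) < (z.choose 3 : ℤ) := by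
      exact_mod_cast Nat.choose_pos hz
    positivity
  rw [hsum]
  calc 2*z*m^(z-1)*d = f (z-1) := hv1.symm
    _ < f (z-1) + f (z-3) := by linarith
    _ ≤ _ := hle

lemma no_sol (a b z : ℕ) (hb : 0 < b) (hba : b < a) (hcop : Nat.Coprime a b)
    (hz : 3 ≤ z) (h : ((a:ℤ)+b)^z = 2^z*((a:ℤ)^z - (b:ℤ)^z)) : False := by
  -- parity: a + b even
  have h2 : (2:ℤ) ∣ ((a:ℤ)+b) := by
    refine Int.prime_two.dvd_of_dvd_pow (n := z) ?_
    rw [h]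
    exact Dvd.dvd.mul_right (dvd_pow_self 2 (by omega : z ≠ 0)) _
  have hab2 : 2 ∣ a + b := by exact_mod_cast h2
  obtain ⟨m, d, ha', hb', hd, hdm⟩ :
      ∃ m d : ℕ, a = m + d ∧ b + d = m ∧ 0 < d ∧ d < m :=
    ⟨(a+b)/2, (a-b)/2, by omega, by omega, by omega, by omega⟩
  -- coprimality of m, d
  have hmd : Nat.Coprime m d := by
    have d1 : Nat.gcd m d ∣ a := ha' ▸ Nat.dvd_add (Nat.gcd_dvd_left m d) (Nat.gcd_dvd_right m d)
    have d2 : Nat.gcd m d ∣ b := by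
      have : b = m - d := by omega
      rw [this]
      exact Nat.dvd_sub (Nat.gcd_dvd_left m d) (Nat.gcd_dvd_right m d)
    exact Nat.eq_one_of_dvd_one (hcop ▸ Nat.dvd_gcd d1 d2)
  -- key equation
  have hA : (a:ℤ) = (m:ℤ) + d := by exact_mod_cast ha'
  have hB : (b:ℤ) = (m:ℤ) - d := by
    have : (b:ℤ) + d = m := by exact_mod_cast hb'
    linarith
  rw [hA, hB] at h
  have key : (2:ℤ)^z * (m:ℤ)^z = 2^z * ((((m:ℤ))+d)^z - (((m:ℤ))-d)^z) := by
    calc (2:ℤ)^z * (m:ℤ)^z = ((2:ℤ)*m)^z := (mul_pow 2 (m:ℤ) z).symm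
      _ = ((((m:ℤ))+d) + (((m:ℤ))-d))^z := by congr 1; ring
      _ = _ := h
  have hkey : ((m:ℤ))^z = (((m:ℤ))+d)^z - (((m:ℤ))-d)^z :=
    mul_left_cancel₀ (pow_ne_zero z two_ne_zero) key
  -- the two expansions mod m^2
  have e1 := sq_dvd_aux (d:ℤ) (m:ℤ) (z-1)
  have e2 := sq_dvd_aux (-(d:ℤ)) (m:ℤ) (z-1)
  rw [show z - 1 + 1 = z by omega] at e1 e2
  have hcz : ((z-1 : ℕ) : ℤ) + 1 = (z:ℤ) := by push_cast [show 1 ≤ z by omega]; ring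
  rw [hcz] at e1 e2
  have hcomm1 : ((d:ℤ) + m) = (m:ℤ) + d := by ring
  have hcomm2 : (-(d:ℤ) + m) = (m:ℤ) - d := by ring
  rw [hcomm1] at e1
  rw [hcomm2] at e2
  have hmz2 : ((m:ℤ))^2 ∣ (m:ℤ)^z := pow_dvd_pow _ (by omega : 2 ≤ z)
  rcases Nat.even_or_odd z with hev | hod
  · -- even z : m^2 ∣ m^z - 2*z*m*d^(z-1)
    have hnp1 : (-(d:ℤ))^z = (d:ℤ)^z := hev.neg_pow _
    have hnp2 : (-(d:ℤ))^(z-1) = -((d:ℤ))^(z-1) := by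
      have : Odd (z-1) := by
        rcases hev with ⟨w, hw⟩
        exact ⟨w-1, by omega⟩
      rw [this.neg_pow]
    rw [hnp1, hnp2] at e2
    have hdvd : ((m:ℤ))^2 ∣ 2*(z:ℤ)*(m:ℤ)*(d:ℤ)^(z-1) := by
      obtain ⟨t1, ht1⟩ := e1
      obtain ⟨t2, ht2⟩ := e2
      obtain ⟨t3, ht3⟩ := hmz2
      refine ⟨t3 - t1 + t2, ?_⟩
      linear_combination ht3 - ht1 + ht2 - hkey
    -- convert to ℕ
    have hdvdN : m^2 ∣ m * (2*z*d^(z-1)) := by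
      have : ((m^2 : ℕ) : ℤ) ∣ ((m * (2*z*d^(z-1)) : ℕ) : ℤ) := by
        push_cast
        convert hdvd using 1
        ring
      exact_mod_cast this
    have hm0 : 0 < m := by omega
    have hdvdN2 : m ∣ 2*z*d^(z-1) := by
      have h' : m * m ∣ m * (2*z*d^(z-1)) := by rwa [← pow_two]
      exact (mul_dvd_mul_iff_left (by omega : m ≠ 0)).mp h'
    have hcop2 : Nat.Coprime m (d^(z-1)) := hmd.pow_right _
    have hm2z : m ∣ 2*z := hcop2.dvd_of_dvd_mul_right hdvdN2
    have hmle : m ≤ 2*z := Nat.le_of_dvd (by omega) hm2z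
    -- contradiction with lemB
    have hBig := lemB (m:ℤ) (d:ℤ) z (by exact_mod_cast hm0) (by exact_mod_cast hd) hz
    rw [← hkey] at hBig
    have hmz' : ((m:ℤ))^z = (m:ℤ) * (m:ℤ)^(z-1) := by
      rw [← pow_succ']
      congr 1
      omega
    have hc1 : ((m:ℤ)) ≤ 2*(z:ℤ) := by exact_mod_cast hmle
    have hc2 : (1:ℤ) ≤ (d:ℤ) := by exact_mod_cast hd
    have hc3 : (0:ℤ) < ((m:ℤ))^(z-1) := pow_pos (by exact_mod_cast hm0) _
    have s1 : (m:ℤ)*(m:ℤ)^(z-1) ≤ 2*(z:ℤ)*(m:ℤ)^(z-1) := mul_le_mul_of_nonneg_right hc1 hc3.le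
    have s2 : 2*(z:ℤ)*(m:ℤ)^(z-1) ≤ 2*(z:ℤ)*(m:ℤ)^(z-1)*(d:ℤ) :=
      le_mul_of_one_le_right (by positivity) hc2
    linarith
  · -- odd z : m^2 ∣ 2*d^z
    have hnp1 : (-(d:ℤ))^z = -((d:ℤ))^z := hod.neg_pow _
    have hnp2 : (-(d:ℤ))^(z-1) = ((d:ℤ))^(z-1) := by
      have : Even (z-1) := by
        rcases hod with ⟨w, hw⟩
        exact ⟨w, by omega⟩
      rw [this.neg_pow]
    rw [hnp1, hnp2] at e2
    have hdvd : ((m:ℤ))^2 ∣ 2*(d:ℤ)^z := by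
      obtain ⟨t1, ht1⟩ := e1
      obtain ⟨t2, ht2⟩ := e2
      obtain ⟨t3, ht3⟩ := hmz2
      refine ⟨t3 - t1 + t2, ?_⟩
      linear_combination ht3 - ht1 + ht2 - hkey
    have hdvdN : m^2 ∣ 2 * d^z := by
      have : ((m^2 : ℕ) : ℤ) ∣ ((2 * d^z : ℕ) : ℤ) := by push_cast; exact hdvd
      exact_mod_cast this
    have hcop2 : Nat.Coprime (m^2) (d^z) := (hmd.pow_right _).pow_left _
    have : m^2 ∣ 2 := hcop2.dvd_of_dvd_mul_right hdvdN
    have hle2 := Nat.le_of_dvd (by norm_num) this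
    have hm2 : 2 ≤ m := by omega
    have : 2^2 ≤ m^2 := Nat.pow_le_pow_left hm2 2
    omega

/-- Task 4: for positive naturals `x, y, z`, the equation
`(x + y)^z = 2^z * (x^z - y^z)` (equivalently `((x+y)/2)^z = x^z - y^z`,
understood over the integers) holds iff `(x, y, z) = (3t, t, 1)` or
`(x, y, z) = (5t, 3t, 2)` for some positive natural `t`. -/
theorem stmt_9 (x y z : ℕ) (hx : 0 < x) (hy : 0 < y) (hz : 0 < z) :
    ((x : ℤ) + y) ^ z = 2 ^ z * ((x : ℤ) ^ z - (y : ℤ) ^ z) ↔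
      ∃ t : ℕ, 0 < t ∧ ((x = 3 * t ∧ y = t ∧ z = 1) ∨ (x = 5 * t ∧ y = 3 * t ∧ z = 2)) := by
  constructor
  · intro h
    -- first: y < x
    have hyx : y < x := by
      by_contra hc
      push_neg at hc
      have h1 : (x:ℤ)^z ≤ (y:ℤ)^z := pow_le_pow_left₀ (by positivity) (by exact_mod_cast hc) z
      have h2 : (0:ℤ) < ((x:ℤ)+y)^z := by positivity
      have h3 : (0:ℤ) < (2:ℤ)^z := by positivity
      nlinarith
    match z with
    | 1 =>
      simp only [pow_one] at h
      have : (x:ℤ) = 3*y := by linarith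
      have hx3 : x = 3*y := by exact_mod_cast this
      exact ⟨y, hy, Or.inl ⟨hx3, rfl, rfl⟩⟩
    | 2 =>
      have h0 : ((3:ℤ)*x - 5*y)*((x:ℤ)+y) = 0 := by linear_combination -h
      rcases mul_eq_zero.mp h0 with h1 | h1
      · have : (3:ℤ)*x = 5*y := by linarith
        have h35 : 3*x = 5*y := by exact_mod_cast this
        refine ⟨y/3, by omega, Or.inr ⟨by omega, by omega, rfl⟩⟩
      · have : (0:ℤ) < (x:ℤ)+y := by positivity
        linarith
    | (n+3) =>
      exfalso
      set g := Nat.gcd x y with hg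
      have hg0 : 0 < g := Nat.gcd_pos_of_pos_left _ hx
      set a := x / g with hadef
      set b := y / g with hbdef
      have hxa : x = g * a := (Nat.mul_div_cancel' (Nat.gcd_dvd_left x y)).symm
      have hyb : y = g * b := (Nat.mul_div_cancel' (Nat.gcd_dvd_right x y)).symm
      have hcop : Nat.Coprime a b := Nat.coprime_div_gcd_div_gcd hg0
      have hb0 : 0 < b := by
        rcases Nat.eq_zero_or_pos b with h0 | h0
        · rw [h0, mul_zero] at hyb; omega
        · exact h0
      have hba : b < a := by
        have : g * b < g * a := by omega
        exact lt_of_mul_lt_mul_left this (Nat.zero_le g)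
      have hx' : (x:ℤ) = (g:ℤ)*a := by exact_mod_cast hxa
      have hy' : (y:ℤ) = (g:ℤ)*b := by exact_mod_cast hyb
      rw [hx', hy', ← mul_add, mul_pow, mul_pow, mul_pow] at h
      have hgz : ((g:ℤ))^(n+3) ≠ 0 := pow_ne_zero _ (by exact_mod_cast hg0.ne')
      have hab : ((a:ℤ)+b)^(n+3) = 2^(n+3)*((a:ℤ)^(n+3) - (b:ℤ)^(n+3)) := by
        apply mul_left_cancel₀ hgz
        linear_combination h
      exact no_sol a b (n+3) hb0 hba hcop (by omega) hab
  · rintro ⟨t, ht, (⟨h1, h2, h3⟩ | ⟨h1, h2, h3⟩)⟩ <;> subst h1 h2 h3 <;> push_cast <;> ring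
end

section
/- Let x, y, z be natural numbers. Then (x + y)^z = (2x)^z + y^z holds if and only if there exists a natural number t such that x = 2t, y = 3t and z = 2. -/
lemma aux_binom (d b : ℕ) : ∀ n : ℕ, ∃ K : ℕ, (d + b)^(n+1) = b^(n+1) + (n+1)*d*b^n + d^2*K := by
  intro n
  induction n with
  | zero => exact ⟨0, by ring⟩
  | succ n ih =>
      obtain ⟨K, hK⟩ := ih
      refine ⟨K*b + (n+1)*b^n + d*K, ?_⟩
      have : (d+b)^(n+1+1) = (d+b)^(n+1) * (d+b) := by ring
      rw [this, hK]; ring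

lemma aux_lb (m c : ℕ) (n : ℕ) : c^(n+1) + (n+1)*m*c^n ≤ (m + c)^(n+1) := by
  obtain ⟨K, hK⟩ := aux_binom m c n
  rw [hK]; omega

lemma aux_R : ∀ z : ℕ, 3 ≤ z → (z+1)^z < 2^(z-1) * z^z := by
  intro z hz
  induction z, hz using Nat.le_induction with
  | base => norm_num
  | succ z hz ih =>
      have hz1 : (1:ℕ) ≤ z := by omega
      have key1 : (z+2)^(z+1) * z^(z+1) < ((z+1)^(z+1))^2 := by
        have h1 : (z+2)*z < (z+1)^2 := by nlinarith
        calc (z+2)^(z+1) * z^(z+1) = ((z+2)*z)^(z+1) := by rw [mul_pow]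
          _ < ((z+1)^2)^(z+1) := Nat.pow_lt_pow_left h1 (by omega)
          _ = ((z+1)^(z+1))^2 := by rw [← pow_mul, ← pow_mul, Nat.mul_comm]
      have key2 : (z+1)^(z+1) ≤ 2^z * z^(z+1) := by
        have h2 : (z+1)^z ≤ 2^(z-1) * z^z := le_of_lt ih
        have h3 : (z+1) ≤ 2*z := by omega
        calc (z+1)^(z+1) = (z+1)^z * (z+1) := by ring
          _ ≤ (2^(z-1) * z^z) * (2*z) := Nat.mul_le_mul h2 h3
          _ = (2^(z-1)*2) * (z^z * z) := by ring
          _ = 2^(z-1+1) * z^(z+1) := by rw [pow_succ, pow_succ]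
          _ = 2^z * z^(z+1) := by congr 2; omega
      have hzpos : 0 < z^(z+1) := pow_pos (by omega) _
      have : (z+2)^(z+1) * z^(z+1) < (2^z * (z+1)^(z+1)) * z^(z+1) := by
        calc (z+2)^(z+1) * z^(z+1) < ((z+1)^(z+1))^2 := key1
          _ = (z+1)^(z+1) * (z+1)^(z+1) := sq _
          _ ≤ (z+1)^(z+1) * (2^z * z^(z+1)) := Nat.mul_le_mul_left _ key2
          _ = (2^z * (z+1)^(z+1)) * z^(z+1) := by ring
      simpa using Nat.lt_of_mul_lt_mul_right this

/-- no solutions for coprime d b with z = n+3 -/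
lemma aux_main (d b n : ℕ) (hd : 0 < d) (hb : 0 < b)
    (hco : Nat.Coprime d b)
    (E : (d + b)^(n+3) = (2*d)^(n+3) + b^(n+3)) : False := by
  -- b > d
  have hbd : d < b := by
    by_contra hle
    push_neg at hle
    have h1 : (d+b)^(n+3) ≤ (2*d)^(n+3) := Nat.pow_le_pow_left (by omega) _
    have h2 : 0 < b^(n+3) := pow_pos hb _
    linarith
  -- d ∣ n+3
  have hdvd : d ∣ (n+3) := by
    obtain ⟨K, hK⟩ := aux_binom d b (n+2)
    have e2 : (n+3)*d*b^(n+2) + d^2*K = (2*d)^(n+3) := by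
      have := hK.symm.trans E
      linarith
    have h1 : d^2 ∣ (2*d)^(n+3) := ⟨2^(n+3) * d^(n+1), by ring⟩
    have h2 : d^2 ∣ d^2*K := Dvd.intro K rfl
    have h3 : d^2 ∣ d^2*K + (n+3)*d*b^(n+2) := by rw [add_comm, e2]; exact h1
    have h4 : d^2 ∣ (n+3)*d*b^(n+2) := (Nat.dvd_add_right h2).mp h3
    have h5 : d*d ∣ d*((n+3)*b^(n+2)) := by
      have e : d^2 = d*d := by ring
      have e' : (n+3)*d*b^(n+2) = d*((n+3)*b^(n+2)) := by ring
      rwa [e, e'] at h4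
    have h6 : d ∣ (n+3)*b^(n+2) := (Nat.mul_dvd_mul_iff_left hd).mp h5
    exact (Nat.Coprime.dvd_of_dvd_mul_right (hco.pow_right _) h6)
  have hdz : d ≤ n+3 := Nat.le_of_dvd (by omega) hdvd
  rcases Nat.lt_or_ge b (2*d) with hb2 | hb2
  · -- b < 2*d, so d+1 ≤ b ≤ 2d-1
    rcases eq_or_lt_of_le (show d+1 ≤ b by omega) with hbeq | hbgt
    · -- b = d+1
      rcases eq_or_lt_of_le hdz with hdeq | hdlt
      · -- d = n+3
        have hbval : b = n + 4 := by omega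
        rw [hdeq, hbval] at E
        have e4 : (n+3) + (n+4) = 1 + 2*(n+3) := by ring
        rw [e4] at E
        have lb := aux_lb 1 (2*(n+3)) (n+2)
        have e3 : (n+3)*1*(2*(n+3))^(n+2) = 2^(n+2) * (n+3)^(n+3) := by
          rw [mul_pow]; ring
        have hR := aux_R (n+3) (by omega)
        have e6 : n + 3 + 1 = n + 4 := by omega
        have e7 : n + 3 - 1 = n + 2 := by omega
        rw [e6, e7] at hR
        linarith
      · -- d < n+3, so 2d ≤ n+3
        have h2d : 2*d ≤ n+3 := by
          obtain ⟨k, hk⟩ := hdvd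
          have hk2 : 2 ≤ k := by
            by_contra hk1
            interval_cases k <;> omega
          calc 2*d = d*2 := by ring
            _ ≤ d*k := Nat.mul_le_mul_left _ hk2
            _ = n+3 := hk.symm
        have hd1z : d + 1 < n+3 := by omega
        have lb := aux_lb 1 (2*d) (n+2)
        have p0 : 0 < (2*d)^(n+2) := pow_pos (by omega) _
        have p1 : (d+1)^(n+2) ≤ (2*d)^(n+2) := Nat.pow_le_pow_left (by omega) _
        have p2 : (d+1)*(d+1)^(n+2) < (n+3)*(2*d)^(n+2) := by
          calc (d+1)*(d+1)^(n+2) ≤ (d+1)*(2*d)^(n+2) := Nat.mul_le_mul_left _ p1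
            _ < (n+3)*(2*d)^(n+2) := mul_lt_mul_of_pos_right hd1z p0
        have p3 : (d+1)^(n+3) = (d+1)*(d+1)^(n+2) := by ring
        have e4 : d + b = 1 + 2*d := by omega
        have e5 : b = d + 1 := by omega
        rw [e4, e5] at E
        have e6 : (n+3)*1*(2*d)^(n+2) = (n+3)*(2*d)^(n+2) := by ring
        linarith
    · -- d+2 ≤ b, b < 2d
      have lb := aux_lb (b-d) (2*d) (n+2)
      have e4 : (b-d) + 2*d = d + b := by omega
      rw [e4] at lb
      have q0 : 0 < (2*d)^(n+2) := pow_pos (by omega) _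
      have q1 : b^(n+3) < (2*d)^(n+3) := Nat.pow_lt_pow_left hb2 (by omega)
      have q2 : (2*d)^(n+3) = (2*d)*(2*d)^(n+2) := by ring
      have q3 : 2*d ≤ (n+3)*(b-d) := by
        have h2 : 2 ≤ b - d := by omega
        calc 2*d ≤ 2*(n+3) := by omega
          _ = (n+3)*2 := by ring
          _ ≤ (n+3)*(b-d) := Nat.mul_le_mul_left _ h2
      have q4 : (2*d)*(2*d)^(n+2) ≤ ((n+3)*(b-d))*(2*d)^(n+2) :=
        Nat.mul_le_mul_right _ q3
      have e5 : ((n+3)*(b-d))*(2*d)^(n+2) = (n+3)*(b-d)*(2*d)^(n+2) := by ring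
      linarith
  · -- 2d ≤ b
    have lb := aux_lb d b (n+2)
    have e4 : d + b = d + b := rfl
    have w0 : 0 < b^(n+2) := pow_pos hb _
    have w1 : (2*d)^(n+2) ≤ b^(n+2) := Nat.pow_le_pow_left hb2 _
    have w2 : (2*d)^(n+3) = (2*d)*(2*d)^(n+2) := by ring
    have w3 : (2*d)*(2*d)^(n+2) < (n+3)*d*b^(n+2) := by
      calc (2*d)*(2*d)^(n+2) ≤ (2*d)*b^(n+2) := Nat.mul_le_mul_left _ w1
        _ < ((n+3)*d)*b^(n+2) := by
            apply mul_lt_mul_of_pos_right _ w0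
            nlinarith
        _ = (n+3)*d*b^(n+2) := by ring
    linarith

/-- Task 5: for positive naturals `x, y, z`, the equation
`(x + y)^z = (2x)^z + y^z` holds iff `x = 2t`, `y = 3t` and `z = 2` for some
positive natural `t`. -/
theorem stmt_10 (x y z : ℕ) (hx : 0 < x) (hy : 0 < y) (hz : 0 < z) :
    (x + y) ^ z = (2 * x) ^ z + y ^ z ↔
      ∃ t : ℕ, 0 < t ∧ x = 2 * t ∧ y = 3 * t ∧ z = 2 := by
  constructor
  · intro h
    rcases Nat.lt_or_ge z 3 with h3 | h3
    · interval_cases z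
      · -- z = 1
        exfalso; simp [pow_one] at h; omega
      · -- z = 2
        have hle1 : 2*y ≤ 3*x := by nlinarith [h, hx]
        have hle2 : 3*x ≤ 2*y := by nlinarith [h, hx]
        have h2 : 2*y = 3*x := le_antisymm hle1 hle2
        have hdvd : 2 ∣ x := by omega
        obtain ⟨t, rfl⟩ := hdvd
        exact ⟨t, by omega, rfl, by omega, rfl⟩
    · -- z ≥ 3
      exfalso
      obtain ⟨g, d, b, hg, hco, hxd, hyb⟩ :
          ∃ g d b : ℕ, 0 < g ∧ Nat.Coprime d b ∧ x = g*d ∧ y = g*b := by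
        refine ⟨Nat.gcd x y, x / Nat.gcd x y, y / Nat.gcd x y,
          Nat.gcd_pos_of_pos_left y hx, Nat.coprime_div_gcd_div_gcd (Nat.gcd_pos_of_pos_left y hx),
          (Nat.mul_div_cancel' (Nat.gcd_dvd_left x y)).symm,
          (Nat.mul_div_cancel' (Nat.gcd_dvd_right x y)).symm⟩
      subst hxd
      subst hyb
      have hd : 0 < d := Nat.pos_of_ne_zero (by rintro rfl; simp at hx)
      have hb : 0 < b := Nat.pos_of_ne_zero (by rintro rfl; simp at hy)
      have h1 : (g*(d+b))^z = (g*(2*d))^z + (g*b)^z := by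
        rw [show g*(d+b) = g*d + g*b by ring, show g*(2*d) = 2*(g*d) by ring]
        exact h
      have E : (d + b)^z = (2*d)^z + b^z := by
        apply Nat.eq_of_mul_eq_mul_left (pow_pos hg z)
        calc g^z * (d+b)^z = (g*(d+b))^z := (mul_pow g (d+b) z).symm
          _ = (g*(2*d))^z + (g*b)^z := h1
          _ = g^z*(2*d)^z + g^z*b^z := by rw [mul_pow g (2*d) z, mul_pow g b z]
          _ = g^z * ((2*d)^z + b^z) := by ring
      obtain ⟨n, rfl⟩ : ∃ n, z = n + 3 := ⟨z - 3, by omega⟩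
      exact aux_main d b n hd hb hco E
  · rintro ⟨t, ht, rfl, rfl, rfl⟩
    ring
end

section
/- Let x and y be natural numbers with y > x. Then (y - x)^{x+y} = x^y holds if and only if x = 1 and y = 2. -/
lemma aux_pow_eq_pow {a b m k : ℕ} (hk : 0 < k) (hco : Nat.Coprime m k)
    (h : a ^ m = b ^ k) : ∃ c : ℕ, a = c ^ k ∧ b = c ^ m := by
  have h' : (a : ℚ≥0) ^ m = (b : ℚ≥0) ^ k := by exact_mod_cast congrArg (Nat.cast (R := ℚ≥0)) h
  obtain ⟨c, hc1, hc2⟩ := (pow_eq_pow_iff_of_coprime hco).mp h'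
  have hden : c.den = 1 := by
    have h1 : c.den ^ k = 1 := by
      rw [← NNRat.den_pow, ← hc1, NNRat.den_natCast]
    exact (pow_eq_one_iff_left hk.ne').mp h1
  have hc : (c.num : ℚ≥0) = c := by
    have := NNRat.num_div_den c
    rw [hden] at this
    simpa using this
  refine ⟨c.num, ?_, ?_⟩
  · have : (a : ℚ≥0) = ((c.num ^ k : ℕ) : ℚ≥0) := by push_cast [hc]; exact hc1
    exact_mod_cast this
  · have : (b : ℚ≥0) = ((c.num ^ m : ℕ) : ℚ≥0) := by push_cast [hc]; exact hc2
    exact_mod_cast this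

/-- Task 7: for positive naturals `x, y` with `y > x`, the equation
`(y - x)^(x+y) = x^y` holds iff `x = 1` and `y = 2`. -/
theorem stmt_12 (x y : ℕ) (hx : 0 < x) (hxy : x < y) :
    (y - x) ^ (x + y) = x ^ y ↔ x = 1 ∧ y = 2 := by
  constructor
  · intro h
    set d := y - x with hdef
    have hd1 : 1 ≤ d := by omega
    rcases eq_or_lt_of_le (show 1 ≤ x from hx) with h1 | h2
    · -- x = 1
      have hx1 : x = 1 := h1.symm
      subst hx1
      have : d ^ (1 + y) = 1 := by simpa using h
      have hd : d = 1 := (pow_eq_one_iff_left (by omega : 1 + y ≠ 0)).mp this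
      omega
    · -- x ≥ 2 : contradiction
      exfalso
      have hx2 : 2 ≤ x := h2
      have hdx : d < x := by
        by_contra hge
        push_neg at hge
        have h3 : x ^ y < x ^ (x + y) := Nat.pow_lt_pow_right h2 (by omega)
        have h4 : x ^ (x + y) ≤ d ^ (x + y) := Nat.pow_le_pow_left hge _
        omega
      set g := Nat.gcd (x + y) y with hgdef
      have hg : 0 < g := Nat.gcd_pos_of_pos_right _ (by omega)
      set m := (x + y) / g with hmdef
      set k := y / g with hkdef
      have hmg : m * g = x + y := Nat.div_mul_cancel (Nat.gcd_dvd_left _ _)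
      have hkg : k * g = y := Nat.div_mul_cancel (Nat.gcd_dvd_right _ _)
      have hco : Nat.Coprime m k := Nat.coprime_div_gcd_div_gcd hg
      have hk0 : 0 < k := by
        rcases Nat.eq_zero_or_pos k with h' | h' 
        · rw [h'] at hkg; omega
        · exact h'
      have h5 : (d ^ m) ^ g = (x ^ k) ^ g := by
        rw [← pow_mul, ← pow_mul, mul_comm m g, mul_comm k g, mul_comm g m, mul_comm g k, hmg, hkg]
        exact h
      have h6 : d ^ m = x ^ k := Nat.pow_left_injective hg.ne' h5
      obtain ⟨c, hcd, hcx⟩ := aux_pow_eq_pow hk0 hco h6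
      have hm0 : 0 < m := by
        rcases Nat.eq_zero_or_pos m with h' | h'
        · rw [h'] at hmg; omega
        · exact h'
      have hc2 : 2 ≤ c := by
        by_contra h'
        push_neg at h'
        have : c ^ m ≤ 1 ^ m := Nat.pow_le_pow_left (by omega) m
        simp at this
        omega
      have hkm : k < m := by
        have : c ^ k < c ^ m := by rw [← hcd, ← hcx]; omega
        exact (Nat.pow_lt_pow_iff_right hc2).mp this
      -- x = (m-k)*g, d = (k-(m-k))*g
      have hxg : (m - k) * g = x := by rw [Nat.sub_mul]; omega
      have hdg : (k - (m - k)) * g = d := by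
        rw [Nat.sub_mul, hxg]; omega
      set s := m - k with hsdef
      set t := k - s with htdef
      have hs1 : 1 ≤ s := by omega
      have ht1 : 1 ≤ t := by
        rcases Nat.eq_zero_or_pos t with h' | h'
        · rw [h'] at hdg; simp at hdg; omega
        · exact h'
      -- c^k * (c^s * t) = c^k * s
      have hmain : c ^ s * t = s := by
        have e1 : c ^ m * t = c ^ k * s := by
          rw [hcx] at hxg
          rw [hcd] at hdg
          calc c ^ m * t = s * g * t := by rw [hxg]
            _ = t * g * s := by ring
            _ = c ^ k * s := by rw [hdg]
        have e2 : c ^ m = c ^ k * c ^ s := by rw [← pow_add]; congr 1; omega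
        have e3 : c ^ k * (c ^ s * t) = c ^ k * s := by rw [← mul_assoc, ← e2]; exact e1
        have hck : 0 < c ^ k := Nat.pow_pos (n := k) (by omega)
        exact Nat.eq_of_mul_eq_mul_left hck e3
      have h2s : s < 2 ^ s := Nat.lt_two_pow_self (n := s)
      have : 2 ^ s ≤ c ^ s := Nat.pow_le_pow_left hc2 s
      nlinarith [hmain, h2s, this, ht1]
  · rintro ⟨rfl, rfl⟩
    norm_num
end

section
/- There are no natural numbers x and y with y > x satisfying (y - x)^{x+y} = y^x. -/
/-- If `d^s = y^a` with `s, a` coprime and `a > 0`, then `d` and `y` are powers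
of a common natural number. -/
lemma nat_exists_common_base {d y s a : ℕ} (hsa : Nat.Coprime s a) (ha : 0 < a)
    (h : d ^ s = y ^ a) : ∃ t : ℕ, d = t ^ a ∧ y = t ^ s := by
  have hq : (d : ℚ) ^ s = (y : ℚ) ^ a := by exact_mod_cast h
  obtain ⟨c, hc1, hc2⟩ := (pow_eq_pow_iff_of_coprime hsa).mp hq
  have hden : c.den = 1 := by
    have h1 : (c ^ a).den = 1 := by rw [← hc1]; exact Rat.den_natCast d
    rw [Rat.den_pow] at h1
    exact (pow_eq_one_iff.mp h1).resolve_right (by omega)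
  have hcnum : (c.num : ℚ) = c := by exact_mod_cast Rat.den_eq_one_iff c |>.mp hden
  have hd : (d : ℤ) = c.num ^ a := by
    have : (d : ℚ) = (c.num : ℚ) ^ a := by rw [hcnum, hc1]
    exact_mod_cast this
  have hy : (y : ℤ) = c.num ^ s := by
    have : (y : ℚ) = (c.num : ℚ) ^ s := by rw [hcnum, hc2]
    exact_mod_cast this
  refine ⟨c.num.natAbs, ?_, ?_⟩
  · have := congrArg Int.natAbs hd
    simpa [Int.natAbs_pow] using this
  · have := congrArg Int.natAbs hy
    simpa [Int.natAbs_pow] using this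

/-- Task 8: there are no positive naturals `x, y` with `y > x` satisfying
`(y - x)^(x+y) = y^x`. -/
theorem stmt_13 : ¬ ∃ x y : ℕ, 0 < x ∧ x < y ∧ (y - x) ^ (x + y) = y ^ x := by
  rintro ⟨x, y, hx, hxy, h⟩
  set d := y - x with hd
  have hxd : x + d = y := by omega
  rcases Nat.lt_or_ge d 2 with hd2 | hd2
  · -- d = 1, so y^x = 1, forcing y = 1, impossible
    have hd1 : d = 1 := by omega
    rw [hd1, one_pow] at h
    have := (pow_eq_one_iff.mp h.symm).resolve_right (by omega)
    omega
  · set g := Nat.gcd x (x + y) with hg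
    have hgpos : 0 < g := Nat.gcd_pos_of_pos_left _ hx
    set a := x / g with hadef
    set s := (x + y) / g with hsdef
    have hga : g * a = x := Nat.mul_div_cancel' (Nat.gcd_dvd_left _ _)
    have hgs : g * s = x + y := Nat.mul_div_cancel' (Nat.gcd_dvd_right _ _)
    have hcop : Nat.Coprime a s := Nat.coprime_div_gcd_div_gcd hgpos
    have ha : 0 < a := by
      rcases Nat.eq_zero_or_pos a with h0 | h0
      · rw [h0, Nat.mul_zero] at hga; omega
      · exact h0
    have hsa : a < s := by
      have : g * a < g * s := by omega
      exact lt_of_mul_lt_mul_left this (Nat.zero_le g)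
    -- d^s = y^a
    have hds : d ^ s = y ^ a := by
      have h1 : (d ^ s) ^ g = (y ^ a) ^ g := by
        rw [← pow_mul, ← pow_mul, mul_comm s g, mul_comm a g, hga, hgs, h]
      exact Nat.pow_left_injective (by omega) h1
    obtain ⟨t, hdt, hyt⟩ := nat_exists_common_base hcop.symm ha hds
    have ht2 : 2 ≤ t := by
      by_contra hcon
      have hle : t ^ a ≤ 1 ^ a := Nat.pow_le_pow_left (by omega) a
      rw [one_pow] at hle
      omega
    -- key linear relation
    have hkey : s * x = a * (x + y) := by
      calc s * x = s * (g * a) := by rw [hga]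
        _ = a * (g * s) := by ring
        _ = a * (x + y) := by rw [hgs]
    set u := s - a with hu
    set T := t ^ u with hT'
    have hts : t ^ s = t ^ a * T := by
      rw [hT', ← pow_add]; congr 1; omega
    have hTu : u < T := by
      calc u < 2 ^ u := Nat.lt_two_pow_self
        _ ≤ t ^ u := Nat.pow_le_pow_left ht2 u
    have hx' : x + t ^ a = t ^ s := by rw [← hdt, ← hyt]; omega
    have hPpos : 0 < t ^ a := pow_pos (by omega) a
    -- from key relation: s*(T-1) = a*(2T-1)
    have heq : s * T + a = 2 * a * T + s := by
      have h2 : s * x + s * t ^ a = s * (t ^ a * T) := by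
        rw [← Nat.mul_add, hx', hts]
      have h3 : x + y = 2 * (t ^ a * T) - t ^ a := by
        rw [← hts, ← hyt]; omega
      have h4 : a * (x + y) * T + a * (x+y) * 1 = a * (x+y) * (T + 1) := by ring
      -- work over integers to avoid truncated subtraction
      have hxval : (x : ℤ) = (t:ℤ) ^ a * T - t ^ a := by
        have h5 : (x : ℤ) + (t:ℤ) ^ a = (t:ℤ) ^ a * T := by
          exact_mod_cast congrArg (Nat.cast : ℕ → ℤ) (hx'.trans hts)
        linarith
      have hyval : (y : ℤ) = (t:ℤ) ^ a * T := by
        have := congrArg (Nat.cast : ℕ → ℤ) (hyt.trans hts)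
        push_cast at this; linarith
      have hkeyZ : (s:ℤ) * x = a * (x + y) := by exact_mod_cast hkey
      rw [hxval, hyval] at hkeyZ
      have hP : (0:ℤ) < (t:ℤ) ^ a := by exact_mod_cast hPpos
      have : (t:ℤ)^a * (s * T + a) = (t:ℤ)^a * (2 * a * T + s) := by linear_combination hkeyZ
      have := mul_left_cancel₀ (ne_of_gt hP) this
      exact_mod_cast this
    -- contradiction: T + a > s forces impossibility
    have hTs : s < T + a := by omega
    rcases Nat.lt_or_ge (2 * a) s with hc | hc
    · have h6 : (2 * a + 1) * T ≤ s * T := Nat.mul_le_mul_right T (by omega)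
      nlinarith
    · have h6 : s * T ≤ 2 * a * T := Nat.mul_le_mul_right T hc
      nlinarith
end

section
/- Let x and y be natural numbers with x ≥ y. Then (x + y)^{x-y} = x^y holds if and only if x = 1 and y = 1. -/
/-- Task 9: for positive naturals `x, y` with `x ≥ y`, the equation
`(x + y)^(x-y) = x^y` holds iff `x = 1` and `y = 1`. -/
theorem stmt_14 (x y : ℕ) (hy : 0 < y) (hxy : y ≤ x) :
    (x + y) ^ (x - y) = x ^ y ↔ x = 1 ∧ y = 1 := by
  constructor
  · intro h
    have hx0 : 0 < x := lt_of_lt_of_le hy hxy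
    rcases eq_or_lt_of_le hxy with heq | hlt
    · -- x = y
      subst heq
      rw [Nat.sub_self, pow_zero] at h
      have h1 := pow_eq_one_iff_left (by omega : y ≠ 0) |>.mp h.symm
      exact ⟨h1, h1⟩
    · exfalso
      by_cases hcase : x - y < y
      · -- valuation argument : x ∣ y, contradiction
        have hdvd : x ∣ y := by
          rw [← Nat.factorization_le_iff_dvd (by omega) (by omega)]
          intro p
          by_cases hp : p.Prime
          · by_contra hab
            push_neg at hab
            set a := x.factorization p with ha
            set b := y.factorization p with hb
            -- b < a
            have hba : b < a := hab
            -- p^b ∣ x + y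
            have hpb_y : p ^ b ∣ y := Nat.ordProj_dvd y p
            have hpa_x : p ^ a ∣ x := Nat.ordProj_dvd x p
            have hpb_x : p ^ b ∣ x := dvd_trans (pow_dvd_pow p hba.le) hpa_x
            have hpb_xy : p ^ b ∣ x + y := Dvd.dvd.add hpb_x hpb_y
            have hxy0 : x + y ≠ 0 := by omega
            have hble : b ≤ (x + y).factorization p :=
              (Nat.Prime.pow_dvd_iff_le_factorization hp hxy0).mp hpb_xy
            -- ¬ p^(b+1) ∣ x + y
            have hpb1_x : p ^ (b + 1) ∣ x := dvd_trans (pow_dvd_pow p hba) hpa_x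
            have hnot : ¬ p ^ (b + 1) ∣ x + y := by
              intro hcontra
              have : p ^ (b + 1) ∣ y := by
                have := Nat.dvd_sub hcontra hpb1_x
                simpa using this
              have := (Nat.Prime.pow_dvd_iff_le_factorization hp (by omega)).mp this
              omega
            have hblt : (x + y).factorization p < b + 1 := by
              by_contra hge
              push_neg at hge
              exact hnot ((Nat.Prime.pow_dvd_iff_le_factorization hp hxy0).mpr hge)
            have hbeq : (x + y).factorization p = b := by omega
            -- equation on factorizations
            have key := congrArg Nat.factorization h
            rw [Nat.factorization_pow, Nat.factorization_pow] at key
            have keyp := DFunLike.congr_fun key p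
            simp only [Finsupp.smul_apply, smul_eq_mul] at keyp
            rw [hbeq, ← ha] at keyp
            -- keyp : (x - y) * b = y * a
            have ha1 : 1 ≤ a := by omega
            nlinarith [hcase, hba, keyp]
          · simp [Nat.factorization_eq_zero_of_not_prime _ hp]
        have := Nat.le_of_dvd hy hdvd
        omega
      · -- x - y ≥ y
        push_neg at hcase
        have h1 : x ^ y < (x + y) ^ y := Nat.pow_lt_pow_left (by omega) (by omega)
        have h2 : (x + y) ^ y ≤ (x + y) ^ (x - y) :=
          Nat.pow_le_pow_right (by omega) hcase
        omega
  · rintro ⟨rfl, rfl⟩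
    norm_num
end

section
/- Let a, b, c, d be natural numbers with gcd(a, b) = 1, suppose p = c^2 + cd + d^2 is a prime number, and suppose p divides a^2 + ab + b^2. Then there exist nonnegative integers A and B such that (a^2 + ab + b^2)/p = A^2 + AB + B^2. -/
/-- Any value of the form `u² - uv + v²` with integers `u, v` is also of the
form `A² + AB + B²` with nonnegative integers `A, B`. -/
lemma toNat_form (u v : ℤ) : ∃ A B : ℕ, u ^ 2 - u * v + v ^ 2 = (A : ℤ) ^ 2 + A * B + B ^ 2 := by
  rcases le_total 0 u with hu | hu <;> rcases le_total 0 v with hv | hv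
  · rcases le_total v u with h | h
    · refine ⟨(u - v).toNat, v.toNat, ?_⟩
      rw [Int.toNat_of_nonneg (by linarith), Int.toNat_of_nonneg hv]; ring
    · refine ⟨(v - u).toNat, u.toNat, ?_⟩
      rw [Int.toNat_of_nonneg (by linarith), Int.toNat_of_nonneg hu]; ring
  · refine ⟨u.toNat, (-v).toNat, ?_⟩
    rw [Int.toNat_of_nonneg hu, Int.toNat_of_nonneg (by linarith)]; ring
  · refine ⟨(-u).toNat, v.toNat, ?_⟩
    rw [Int.toNat_of_nonneg (by linarith), Int.toNat_of_nonneg hv]; ring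
  · rcases le_total v u with h | h
    · refine ⟨(u - v).toNat, (-u).toNat, ?_⟩
      rw [Int.toNat_of_nonneg (by linarith), Int.toNat_of_nonneg (by linarith)]; ring
    · refine ⟨(v - u).toNat, (-v).toNat, ?_⟩
      rw [Int.toNat_of_nonneg (by linarith), Int.toNat_of_nonneg (by linarith)]; ring

lemma key_div (P n X Y : ℤ) (hP : Prime P) (hE : X ^ 2 - X * Y + Y ^ 2 = n * P)
    (hY : P ∣ Y) (hn : P ∣ n) : ∃ A B : ℕ, n = P * ((A : ℤ) ^ 2 + A * B + B ^ 2) := by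
  have hX2 : P ∣ X ^ 2 := by
    have : X ^ 2 = n * P + X * Y - Y ^ 2 := by linarith
    rw [this]
    exact dvd_sub (dvd_add (Dvd.intro_left n rfl) (hY.mul_left X)) (dvd_pow hY two_ne_zero)
  have hX : P ∣ X := hP.dvd_of_dvd_pow hX2
  obtain ⟨x, hx⟩ := hX
  obtain ⟨y, hy⟩ := hY
  have hP0 : P ≠ 0 := hP.ne_zero
  have hq : n = P * (x ^ 2 - x * y + y ^ 2) := by
    have h1 : n * P = (P * (x ^ 2 - x * y + y ^ 2)) * P := by
      rw [← hE, hx, hy]; ring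
    exact mul_right_cancel₀ hP0 h1
  obtain ⟨A, B, hAB⟩ := toNat_form x y
  exact ⟨A, B, by rw [hq, hAB]⟩

/-- Lemma 2: if `a, b, c, d` are positive naturals with `gcd(a,b) = 1`,
`p = c² + cd + d²` is prime, and `p` divides `a² + ab + b²`, then the
quotient `(a² + ab + b²)/p` is again of the form `A² + AB + B²` with
`A, B` nonnegative integers. -/
theorem stmt_18 (a b c d p : ℕ) (ha : 0 < a) (hb : 0 < b) (hc : 0 < c) (hd : 0 < d)
    (hgcd : Nat.gcd a b = 1) (hp : p = c ^ 2 + c * d + d ^ 2) (hpp : p.Prime)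
    (hdvd : p ∣ a ^ 2 + a * b + b ^ 2) :
    ∃ A B : ℕ, a ^ 2 + a * b + b ^ 2 = p * (A ^ 2 + A * B + B ^ 2) := by
  set n : ℤ := (a : ℤ) ^ 2 + a * b + b ^ 2 with hn_def
  have hP : Prime (p : ℤ) := Nat.prime_iff_prime_int.mp hpp
  have hpz : (p : ℤ) = (c : ℤ) ^ 2 + c * d + d ^ 2 := by exact_mod_cast hp
  have hn : (p : ℤ) ∣ n := by rw [hn_def]; exact_mod_cast hdvd
  have hprod : (p : ℤ) ∣ ((a : ℤ) * d - b * c) * ((a : ℤ) * d + b * c + b * d) := by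
    have hid : ((a : ℤ) * d - b * c) * ((a : ℤ) * d + b * c + b * d)
        = (d : ℤ) ^ 2 * n - (b : ℤ) ^ 2 * (p : ℤ) := by
      rw [hn_def, hpz]; ring
    rw [hid]
    exact dvd_sub (hn.mul_left _) (Dvd.intro_left _ rfl)
  have key : ∃ A B : ℕ, n = (p : ℤ) * ((A : ℤ) ^ 2 + A * B + B ^ 2) := by
    rcases hP.dvd_or_dvd hprod with h | h
    · apply key_div (p : ℤ) n ((a : ℤ) * c + a * d + b * d) ((a : ℤ) * d - b * c) hP _ h hn
      rw [hn_def, hpz]; ring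
    · apply key_div (p : ℤ) n ((a : ℤ) * c - b * d) (-((a : ℤ) * d + b * c + b * d)) hP _
        (dvd_neg.mpr h) hn
      rw [hn_def, hpz]; ring
  obtain ⟨A, B, hAB⟩ := key
  rw [hn_def] at hAB
  exact ⟨A, B, by exact_mod_cast hAB⟩
end

section
/- Let a and b be natural numbers with gcd(a, b) = 1. Then every positive divisor m of a^2 + ab + b^2 can be written as m = c^2 + cd + d^2 for some nonnegative integers c and d. -/
/-- Balanced residue: every integer is congruent mod `m` to some `a'` with `2|a'| ≤ m`. -/
lemma aux_balres (a : ℤ) (m : ℕ) (hm : 0 < m) :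
    ∃ a' : ℤ, (m:ℤ) ∣ (a - a') ∧ 2 * |a'| ≤ m := by
  have h0 : (0:ℤ) ≤ a % m := Int.emod_nonneg a (by positivity)
  have h1 : a % m < m := Int.emod_lt_of_pos a (by exact_mod_cast hm)
  have hd : (m:ℤ) ∣ a - a % m := Int.dvd_self_sub_of_emod_eq rfl
  by_cases h : 2 * (a % m) ≤ m
  · exact ⟨a % m, hd, by rw [abs_of_nonneg h0]; omega⟩
  · refine ⟨a % m - m, ?_, by rw [abs_of_nonpos (by omega)]; omega⟩
    have : a - (a % m - m) = (a - a % m) + m := by ring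
    rw [this]; exact dvd_add hd (dvd_refl _)

/-- If `N * p = U² + UV + V²` with `p ∣ U`, `p ∣ V`, then `N = p * (x² + xy + y²)`. -/
lemma aux_cancel (p : ℕ) (hp0 : (p:ℤ) ≠ 0) (N U V : ℤ) (hU : (p:ℤ) ∣ U) (hV : (p:ℤ) ∣ V)
    (h : N * p = U^2 + U*V + V^2) : ∃ x y : ℤ, N = (p:ℤ) * (x^2 + x*y + y^2) := by
  obtain ⟨x, hx⟩ := hU
  obtain ⟨y, hy⟩ := hV
  refine ⟨x, y, mul_right_cancel₀ hp0 ?_⟩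
  rw [hx, hy] at h
  linear_combination h

/-- Sub-step: if `N * p = X² + XY + Y²` with `p` prime, `p ∣ N`, `p ∣ Y`,
then `N = p * (x² + xy + y²)`. -/
lemma aux_subdiv (p : ℕ) (hp : Prime (p:ℤ)) (N X Y : ℤ) (hN : (p:ℤ) ∣ N)
    (hF : N * p = X^2 + X*Y + Y^2) (hY : (p:ℤ) ∣ Y) :
    ∃ x y : ℤ, N = (p:ℤ) * (x^2 + x*y + y^2) := by
  have hp2 : (p:ℤ) * (p:ℤ) ∣ X^2 + X*Y + Y^2 := by
    rw [← hF]; exact mul_dvd_mul hN dvd_rfl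
  have hpF : (p:ℤ) ∣ X^2 + X*Y + Y^2 := (dvd_mul_right _ _).trans hp2
  have hpXXY : (p:ℤ) ∣ X * (X + Y) := by
    have he : X * (X + Y) = (X^2 + X*Y + Y^2) - Y*Y := by ring
    rw [he]; exact dvd_sub hpF (hY.mul_left Y)
  rcases hp.dvd_mul.mp hpXXY with hX | hXY
  · exact aux_cancel p hp.ne_zero N X Y hX hY hF
  · exact aux_cancel p hp.ne_zero N (X+Y) (-Y) hXY (hY.neg_right) (by linear_combination hF)

/-- Key division lemma: if a prime `p` divides `a² + ab + b²` and `p` itself is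
of the form `c² + cd + d²`, then the quotient is again of that form. -/
lemma aux_div (p : ℕ) (hp : p.Prime) (a b c d : ℤ)
    (h1 : (p:ℤ) ∣ a^2 + a*b + b^2) (h2 : (p:ℤ) = c^2 + c*d + d^2) :
    ∃ x y : ℤ, a^2 + a*b + b^2 = (p:ℤ) * (x^2 + x*y + y^2) := by
  have hpi : Prime (p:ℤ) := Nat.prime_iff_prime_int.mp hp
  have key : (p:ℤ) ∣ (a*d - b*c) * (a*d + b*c + b*d) := by
    have he : (a*d - b*c) * (a*d + b*c + b*d)
        = d^2 * (a^2 + a*b + b^2) - b^2 * (c^2 + c*d + d^2) := by ring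
    rw [he, ← h2]
    exact dvd_sub (h1.mul_left _) (dvd_mul_left _ _)
  rcases hpi.dvd_mul.mp key with hY | hY
  · -- product identity: F(a,b) * F(c,d) = F(ac+ad+bd, bc-ad)
    refine aux_subdiv p hpi _ (a*c + a*d + b*d) (b*c - a*d) h1 ?_ (by
      have : b*c - a*d = -(a*d - b*c) := by ring
      rw [this]; exact hY.neg_right)
    rw [h2]; ring
  · refine aux_subdiv p hpi _ (a*c - b*d) (a*d + b*c + b*d) h1 ?_ hY
    rw [h2]; ring

/-- Peeling lemma: if `s * t = x² + xy + y²` and every prime factor of `s` is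
representable, then `t` is representable. -/
lemma aux_peel : ∀ s : ℕ, 0 < s → ∀ t x y : ℤ, (s:ℤ) * t = x^2 + x*y + y^2 →
    (∀ q : ℕ, q.Prime → q ∣ s → ∃ c d : ℤ, (q:ℤ) = c^2 + c*d + d^2) →
    ∃ u v : ℤ, t = u^2 + u*v + v^2 := by
  intro s
  induction s using Nat.strong_induction_on with
  | _ s ih =>
    intro hs t x y h hq
    by_cases h1 : s = 1
    · exact ⟨x, y, by rw [h1] at h; push_cast at h; linarith⟩
    · obtain ⟨q, hqp, hqs⟩ := Nat.exists_prime_and_dvd h1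
      obtain ⟨c, d, hcd⟩ := hq q hqp hqs
      have hqF : (q:ℤ) ∣ x^2 + x*y + y^2 := by
        rw [← h]
        exact Dvd.dvd.mul_right (Int.natCast_dvd_natCast.mpr hqs) t
      obtain ⟨x', y', hx'⟩ := aux_div q hqp x y c d hqF hcd
      obtain ⟨s', hs'⟩ := hqs
      have hq0 : (q:ℤ) ≠ 0 := by exact_mod_cast hqp.ne_zero
      have hkey : (s':ℤ) * t = x'^2 + x'*y' + y'^2 := by
        apply mul_left_cancel₀ hq0
        have hc : (s:ℤ) = (q:ℤ) * (s':ℤ) := by exact_mod_cast congrArg (Nat.cast : ℕ → ℤ) hs'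
        rw [hc] at h
        rw [← hx', ← h]; ring
      have hs'pos : 0 < s' := by
        rcases Nat.eq_zero_or_pos s' with h0 | h0
        · subst h0; omega
        · exact h0
      have hs'lt : s' < s := by
        have := hqp.two_le
        calc s' < q * s' := by nlinarith
        _ = s := hs'.symm
      exact ih s' hs'lt hs'pos t x' y' hkey
        (fun q' hq' hd => hq q' hq' (hs' ▸ hd.mul_left q))

/-- Every prime dividing `a² + ab + b²` (with `p` not dividing both `a` and `b`)
is of the form `c² + cd + d²`. -/
lemma aux_prime : ∀ p : ℕ, p.Prime → ∀ a b : ℤ, (p:ℤ) ∣ a^2 + a*b + b^2 →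
    ¬((p:ℤ) ∣ a ∧ (p:ℤ) ∣ b) → ∃ c d : ℤ, (p:ℤ) = c^2 + c*d + d^2 := by
  intro p
  induction p using Nat.strong_induction_on with
  | _ p ih =>
    intro hp a b hdvd hnot
    obtain ⟨a', ha'd, ha'b⟩ := aux_balres a p hp.pos
    obtain ⟨b', hb'd, hb'b⟩ := aux_balres b p hp.pos
    have hpa : a' ≡ a [ZMOD (p:ℤ)] := Int.modEq_iff_dvd.mpr ha'd
    have hpb : b' ≡ b [ZMOD (p:ℤ)] := Int.modEq_iff_dvd.mpr hb'd
    have hF' : (p:ℤ) ∣ a'^2 + a'*b' + b'^2 := by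
      have h2 : a'^2 + a'*b' + b'^2 ≡ a^2 + a*b + b^2 [ZMOD (p:ℤ)] := by
        have := ((hpa.mul hpa).add (hpa.mul hpb)).add (hpb.mul hpb)
        simpa [pow_two] using this
      exact Int.modEq_zero_iff_dvd.mp (h2.trans (Int.modEq_zero_iff_dvd.mpr hdvd))
    have hp0 : (0:ℤ) < (p:ℤ) := by exact_mod_cast hp.pos
    -- basic positivity and size bounds
    have habs : a'^2 = |a'|^2 := (sq_abs a').symm
    have hbabs : b'^2 = |b'|^2 := (sq_abs b').symm
    have hab : a'*b' ≤ |a'| * |b'| := (le_abs_self _).trans (le_of_eq (abs_mul a' b'))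
    have hN0 : 0 ≤ a'^2 + a'*b' + b'^2 := by nlinarith [sq_nonneg (2*a' + b'), sq_nonneg b']
    have hNlt : a'^2 + a'*b' + b'^2 < (p:ℤ)^2 := by
      have h3 : (2*|a'|) * (2*|b'|) ≤ (p:ℤ) * (p:ℤ) :=
        mul_le_mul ha'b hb'b (by positivity) (by positivity)
      have h4 : (2*|a'|) * (2*|a'|) ≤ (p:ℤ) * (p:ℤ) :=
        mul_le_mul ha'b ha'b (by positivity) (by positivity)
      have h5 : (2*|b'|) * (2*|b'|) ≤ (p:ℤ) * (p:ℤ) :=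
        mul_le_mul hb'b hb'b (by positivity) (by positivity)
      nlinarith [hab, habs, hbabs]
    obtain ⟨r, hr⟩ := hF'
    have hr0 : 0 ≤ r := by nlinarith
    have hrp : r < (p:ℤ) := by nlinarith
    -- r ≠ 0: otherwise p divides both a and b
    have hrz : r ≠ 0 := by
      intro h0
      rw [h0, mul_zero] at hr
      have hb'0 : b' = 0 := by nlinarith [sq_nonneg (2*a' + b'), sq_nonneg b']
      have ha'0 : a' = 0 := by nlinarith [sq_nonneg a']
      refine hnot ⟨?_, ?_⟩
      · simpa [ha'0] using ha'd
      · simpa [hb'0] using hb'd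
    -- remove common factor g = gcd(a',b')
    set g : ℕ := Int.gcd a' b' with hg
    have hgne : (g:ℤ) ≠ 0 := by
      intro h0
      have hg0 : Int.gcd a' b' = 0 := by exact_mod_cast h0
      obtain ⟨h0a, h0b⟩ := Int.gcd_eq_zero_iff.mp hg0
      apply hrz
      have hpr0 : (p:ℤ) * r = 0 := by rw [← hr, h0a, h0b]; ring
      exact (mul_eq_zero.mp hpr0).resolve_left (ne_of_gt hp0)
    have hga : (g:ℤ) ∣ a' := Int.gcd_dvd_left a' b'
    have hgb : (g:ℤ) ∣ b' := Int.gcd_dvd_right a' b'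
    set a'' := a' / g with ha''
    set b'' := b' / g with hb''
    have haa : a' = g * a'' := (Int.mul_ediv_cancel' hga).symm
    have hbb : b' = g * b'' := (Int.mul_ediv_cancel' hgb).symm
    have hgcd1 : Int.gcd a'' b'' = 1 := by
      apply Int.gcd_div_gcd_div_gcd
      exact Nat.pos_of_ne_zero (by exact_mod_cast hgne)
    -- p does not divide g
    have hpg : ¬ (p:ℤ) ∣ (g:ℤ) := by
      intro hh
      refine hnot ⟨?_, ?_⟩
      · have hpa' : (p:ℤ) ∣ a' := hh.trans hga
        have : a = (a - a') + a' := by ring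
        rw [this]; exact dvd_add ha'd hpa'
      · have hpb' : (p:ℤ) ∣ b' := hh.trans hgb
        have : b = (b - b') + b' := by ring
        rw [this]; exact dvd_add hb'd hpb'
    -- g² ∣ r
    have hkey : (p:ℤ) * r = (g:ℤ)^2 * (a''^2 + a''*b'' + b''^2) := by
      rw [← hr, haa, hbb]; ring
    have hcop : IsCoprime ((g:ℤ)^2) ((p:ℤ)) := by
      have hpP : Prime (p:ℤ) := Nat.prime_iff_prime_int.mp hp
      exact ((hpP.coprime_iff_not_dvd.mpr hpg).symm).pow_left
    have hg2r : (g:ℤ)^2 ∣ r := by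
      apply hcop.dvd_of_dvd_mul_left
      exact ⟨a''^2 + a''*b'' + b''^2, by linarith [hkey]⟩
    obtain ⟨r', hr'⟩ := hg2r
    have hg20 : ((g:ℤ)^2) ≠ 0 := pow_ne_zero _ hgne
    have hmain : (p:ℤ) * r' = a''^2 + a''*b'' + b''^2 := by
      apply mul_left_cancel₀ hg20
      rw [show (g:ℤ)^2 * ((p:ℤ) * r') = (p:ℤ) * ((g:ℤ)^2 * r') by ring, ← hr', hkey]
    have hg2pos : (0:ℤ) < (g:ℤ)^2 := lt_of_le_of_ne (sq_nonneg _) (Ne.symm hg20)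
    have hr'0 : 0 < r' := by
      rcases lt_trichotomy r' 0 with h | h | h
      · nlinarith
      · exfalso; apply hrz; rw [hr', h, mul_zero]
      · exact h
    have hg21 : (1:ℤ) ≤ (g:ℤ)^2 := by linarith [Int.lt_iff_add_one_le.mp hg2pos]
    have hr'le : r' ≤ r := by
      rw [hr']
      exact le_mul_of_one_le_left hr'0.le hg21
    -- apply peeling with s = r'.toNat, t = p
    set s := r'.toNat with hs
    have hscast : (s:ℤ) = r' := Int.toNat_of_nonneg hr'0.le
    have hspos : 0 < s := by omega
    have hslt : (s:ℤ) < (p:ℤ) := by rw [hscast]; linarith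
    have hqrep : ∀ q : ℕ, q.Prime → q ∣ s → ∃ c d : ℤ, (q:ℤ) = c^2 + c*d + d^2 := by
      intro q hq hqs
      have hqlt : q < p := by
        have h1 : q ≤ s := Nat.le_of_dvd hspos hqs
        have : s < p := by exact_mod_cast hslt
        omega
      apply ih q hqlt hq a'' b''
      · have : (q:ℤ) ∣ r' := hscast ▸ Int.natCast_dvd_natCast.mpr hqs
        rw [← hmain]
        exact this.mul_left _
      · rintro ⟨hqa, hqb⟩
        have : (q:ℤ) ∣ (Int.gcd a'' b'' : ℤ) := Int.dvd_coe_gcd hqa hqb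
        rw [hgcd1] at this
        have : q ∣ 1 := by exact_mod_cast this
        exact hq.one_lt.ne' (Nat.dvd_one.mp this)
    apply aux_peel s hspos ((p:ℤ)) a'' b'' (by rw [hscast, mul_comm]; exact hmain) hqrep

/-- Normalization: an integer representation can be turned into one with
nonnegative entries. -/
lemma aux_toNat (x y : ℤ) : ∃ c d : ℕ, x^2 + x*y + y^2 = (c:ℤ)^2 + (c:ℤ)*(d:ℤ) + (d:ℤ)^2 := by
  rcases le_total 0 x with hx | hx <;> rcases le_total 0 y with hy | hy
  · exact ⟨x.toNat, y.toNat, by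
      rw [Int.toNat_of_nonneg hx, Int.toNat_of_nonneg hy]⟩
  · rcases le_total 0 (x + y) with hxy | hxy
    · refine ⟨(x+y).toNat, (-y).toNat, ?_⟩
      rw [Int.toNat_of_nonneg hxy, Int.toNat_of_nonneg (by omega)]; ring
    · refine ⟨(-(x+y)).toNat, x.toNat, ?_⟩
      rw [Int.toNat_of_nonneg (by omega), Int.toNat_of_nonneg hx]; ring
  · rcases le_total 0 (x + y) with hxy | hxy
    · refine ⟨(x+y).toNat, (-x).toNat, ?_⟩
      rw [Int.toNat_of_nonneg hxy, Int.toNat_of_nonneg (by omega)]; ring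
    · refine ⟨(-(x+y)).toNat, y.toNat, ?_⟩
      rw [Int.toNat_of_nonneg (by omega), Int.toNat_of_nonneg hy]; ring
  · refine ⟨(-x).toNat, (-y).toNat, ?_⟩
    rw [Int.toNat_of_nonneg (by omega), Int.toNat_of_nonneg (by omega)]; ring

/-- Theorem 5: if `a, b` are positive naturals with `gcd(a,b) = 1`, then every
positive divisor `m` of `a² + ab + b²` can be written as `m = c² + cd + d²`
for some nonnegative integers `c, d`. -/
theorem stmt_19 (a b : ℕ) (ha : 0 < a) (hb : 0 < b) (hgcd : Nat.gcd a b = 1) :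
    ∀ m : ℕ, 0 < m → m ∣ a ^ 2 + a * b + b ^ 2 →
      ∃ c d : ℕ, m = c ^ 2 + c * d + d ^ 2 := by
  intro m
  induction m using Nat.strong_induction_on with
  | _ m ih =>
    intro hm hdvd
    by_cases h1 : m = 1
    · exact ⟨1, 0, by simp [h1]⟩
    · obtain ⟨q, hqp, hqm⟩ := Nat.exists_prime_and_dvd h1
      have hqF : (q:ℤ) ∣ (a:ℤ)^2 + (a:ℤ)*(b:ℤ) + (b:ℤ)^2 := by
        have : q ∣ a ^ 2 + a * b + b ^ 2 := hqm.trans hdvd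
        have := Int.natCast_dvd_natCast.mpr this
        push_cast at this
        convert this using 1
      have hnot : ¬((q:ℤ) ∣ (a:ℤ) ∧ (q:ℤ) ∣ (b:ℤ)) := by
        rintro ⟨h1, h2⟩
        have ha' : q ∣ a := Int.natCast_dvd_natCast.mp h1
        have hb' : q ∣ b := Int.natCast_dvd_natCast.mp h2
        have : q ∣ Nat.gcd a b := Nat.dvd_gcd ha' hb'
        rw [hgcd] at this
        exact hqp.one_lt.ne' (Nat.dvd_one.mp this)
      obtain ⟨c, d, hq⟩ := aux_prime q hqp (a:ℤ) (b:ℤ) hqF hnot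
      obtain ⟨m', hm'⟩ := hqm
      have hm'pos : 0 < m' := by
        rcases Nat.eq_zero_or_pos m' with h0 | h0
        · subst h0; omega
        · exact h0
      have hm'lt : m' < m := by
        have := hqp.two_le
        calc m' < q * m' := by nlinarith
        _ = m := hm'.symm
      obtain ⟨e, f, hef⟩ := ih m' hm'lt hm'pos (dvd_trans ⟨q, by rw [hm']; ring⟩ hdvd)
      -- now m = q * m' = (c²+cd+d²)(e²+ef+f²) = F(ce-df, cf+de+df)
      have hmZ : (m:ℤ) = (c^2 + c*d + d^2) * ((e:ℤ)^2 + (e:ℤ)*(f:ℤ) + (f:ℤ)^2) := by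
        rw [← hq]
        have : (m':ℤ) = (e:ℤ)^2 + (e:ℤ)*(f:ℤ) + (f:ℤ)^2 := by exact_mod_cast hef
        rw [← this]
        exact_mod_cast congrArg (Nat.cast : ℕ → ℤ) hm'
      have hprod : (m:ℤ) = (c*e - d*f)^2 + (c*e - d*f)*(c*f + d*e + d*f)
          + (c*f + d*e + d*f)^2 := by rw [hmZ]; ring
      obtain ⟨C, D, hCD⟩ := aux_toNat (c*e - d*f) (c*f + d*e + d*f)
      refine ⟨C, D, ?_⟩
      have : (m:ℤ) = (C:ℤ)^2 + (C:ℤ)*(D:ℤ) + (D:ℤ)^2 := by rw [hprod, hCD]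
      exact_mod_cast this
end
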